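/- arXiv:math/0307148 — 3 statements merged into one kernel-verified Lean document; each statement's English description precedes it below -/
import Mathlib

section
/- Let p ∈ (0,1]. For every function f : 𝒳 → ℝ with π(f) = 0 and every t > 0, π[(P_t f)²] ≤ ((4−2p)/p)^{−p/(2−p)} · (K(p)·t)^{−p/(2−p)} · ‖f‖_∞². -/
open scoped BigOperators

noncomputable section

/-- The generator matrix of the Markov process: `L f (x) = ∑ y, k x y * π y * (f y - f x)`. -/
def genMat {X : Type} [Fintype X] [DecidableEq X] (π : X → ℝ) (k : X → X → ℝ) :
    Matrix X X ℝ :=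
  fun x y => k x y * π y - if x = y then ∑ z, k x z * π z else 0

/-- The Markov semigroup `P_t = e^{tL}` applied to a function `f`. -/
def smg {X : Type} [Fintype X] [DecidableEq X] (π : X → ℝ) (k : X → X → ℝ)
    (t : ℝ) (f : X → ℝ) : X → ℝ :=
  (NormedSpace.exp (t • genMat π k)).mulVec f

/-- The Dirichlet form `E(f,g)`. -/
def dirichletForm {X : Type} [Fintype X] (π : X → ℝ) (k : X → X → ℝ)
    (f g : X → ℝ) : ℝ :=
  (1 / 2) * ∑ x, ∑ y, (f x - f y) * (g x - g y) * k x y * π x * π y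

/-- The sup norm `‖f‖_∞`. -/
def supNorm {X : Type} [Fintype X] (f : X → ℝ) : ℝ := ⨆ x, |f x|

/-- The constant `K(p)`: the infimum over nonzero `f` with `π(f) = 0` of
`E(f,f) ‖f‖_∞^{(4-2p)/p} / π(f²)^{2/p}`. -/
def Kconst {X : Type} [Fintype X] (π : X → ℝ) (k : X → X → ℝ) (p : ℝ) : ℝ :=
  sInf { r : ℝ | ∃ f : X → ℝ, f ≠ 0 ∧ (∑ x, π x * f x) = 0 ∧
    r = dirichletForm π k f f * supNorm f ^ ((4 - 2 * p) / p) /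
      (∑ x, π x * (f x) ^ 2) ^ (2 / p) }

set_option linter.unusedSectionVars false

namespace Aux

variable {X : Type} [Fintype X] [DecidableEq X] [Nonempty X]

lemma supNorm_eq_norm (f : X → ℝ) : supNorm f = ‖f‖ := by
  have hbdd : BddAbove (Set.range fun x => |f x|) := (Set.finite_range _).bddAbove
  have h1 : ∀ x, |f x| ≤ supNorm f := fun x => le_ciSup hbdd x
  have h0 : 0 ≤ supNorm f := le_trans (abs_nonneg _) (h1 (Classical.arbitrary X))
  refine le_antisymm (ciSup_le fun x => ?_) ((pi_norm_le_iff_of_nonneg h0).2 fun x => ?_)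
  · simpa [Real.norm_eq_abs] using norm_le_pi_norm f x
  · simpa [Real.norm_eq_abs] using h1 x

lemma supNorm_nonneg (f : X → ℝ) : 0 ≤ supNorm f := by
  rw [supNorm_eq_norm]; exact norm_nonneg f

lemma abs_le_supNorm (f : X → ℝ) (x : X) : |f x| ≤ supNorm f := by
  rw [supNorm_eq_norm]; simpa [Real.norm_eq_abs] using norm_le_pi_norm f x

lemma supNorm_pos {f : X → ℝ} (hf : f ≠ 0) : 0 < supNorm f := by
  rw [supNorm_eq_norm]; exact norm_pos_iff.2 hf

lemma supNorm_le {f : X → ℝ} {M : ℝ} (h : ∀ x, |f x| ≤ M) : supNorm f ≤ M :=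
  ciSup_le h

lemma mulVec_genMat (π : X → ℝ) (k : X → X → ℝ) (g : X → ℝ) (x : X) :
    (genMat π k).mulVec g x = ∑ y, k x y * π y * (g y - g x) := by
  simp only [genMat, Matrix.mulVec, dotProduct, sub_mul, ite_mul, zero_mul,
    Finset.sum_sub_distrib, Finset.sum_ite_eq, Finset.mem_univ, if_true, mul_sub,
    Finset.sum_mul]

lemma dirichletForm_nonneg (π : X → ℝ) (hπpos : ∀ x, 0 < π x)
    (k : X → X → ℝ) (hknn : ∀ x y, 0 ≤ k x y) (g : X → ℝ) :
    0 ≤ dirichletForm π k g g := by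
  unfold dirichletForm
  have : ∀ x y : X, (0:ℝ) ≤ (g x - g y) * (g x - g y) * k x y * π x * π y := fun x y =>
    mul_nonneg (mul_nonneg (mul_nonneg (mul_self_nonneg _) (hknn x y)) (hπpos x).le)
      (hπpos y).le
  exact mul_nonneg (by norm_num)
    (Finset.sum_nonneg fun x _ => Finset.sum_nonneg fun y _ => this x y)

lemma sum_g_mulVec (π : X → ℝ) (k : X → X → ℝ) (hksymm : ∀ x y, k x y = k y x)
    (g : X → ℝ) :
    ∑ x, π x * (g x * (genMat π k).mulVec g x) = - dirichletForm π k g g := by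
  have hexp : ∑ x, π x * (g x * (genMat π k).mulVec g x)
      = ∑ x, ∑ y, π x * π y * k x y * (g x * (g y - g x)) := by
    refine Finset.sum_congr rfl fun x _ => ?_
    rw [mulVec_genMat, Finset.mul_sum, Finset.mul_sum]
    exact Finset.sum_congr rfl fun y _ => by ring
  have hswap : ∑ x, ∑ y, π x * π y * k x y * (g x * (g y - g x))
      = ∑ x, ∑ y, π x * π y * k x y * (g y * (g x - g y)) := by
    rw [Finset.sum_comm]
    refine Finset.sum_congr rfl fun x _ => Finset.sum_congr rfl fun y _ => ?_
    rw [hksymm y x]; ring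
  have hE : dirichletForm π k g g
      = (1/2) * (-(∑ x, ∑ y, π x * π y * k x y * (g x * (g y - g x)))
          + -(∑ x, ∑ y, π x * π y * k x y * (g y * (g x - g y)))) := by
    unfold dirichletForm
    rw [← Finset.sum_neg_distrib, ← Finset.sum_neg_distrib, ← Finset.sum_add_distrib]
    congr 1
    refine Finset.sum_congr rfl fun x _ => ?_
    rw [← Finset.sum_neg_distrib, ← Finset.sum_neg_distrib, ← Finset.sum_add_distrib]
    exact Finset.sum_congr rfl fun y _ => by ring
  rw [hexp, hE, ← hswap]
  ring

lemma sum_mulVec_zero (π : X → ℝ) (k : X → X → ℝ) (hksymm : ∀ x y, k x y = k y x)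
    (g : X → ℝ) :
    ∑ x, π x * (genMat π k).mulVec g x = 0 := by
  have hexp : ∑ x, π x * (genMat π k).mulVec g x
      = ∑ x, ∑ y, π x * π y * k x y * (g y - g x) := by
    refine Finset.sum_congr rfl fun x _ => ?_
    rw [mulVec_genMat, Finset.mul_sum]
    exact Finset.sum_congr rfl fun y _ => by ring
  have hswap : ∑ x, ∑ y, π x * π y * k x y * (g y - g x)
      = ∑ x, ∑ y, -(π x * π y * k x y * (g y - g x)) := by
    conv_lhs => rw [Finset.sum_comm]
    refine Finset.sum_congr rfl fun x _ => Finset.sum_congr rfl fun y _ => ?_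
    rw [hksymm y x]; ring
  have := hexp
  rw [hswap] at hexp
  simp only [Finset.sum_neg_distrib] at hexp
  linarith [this, hexp]

section ExpFacts

open NormedSpace

attribute [local instance] Matrix.linftyOpSemiNormedRing Matrix.linftyOpNormedRing
  Matrix.linftyOpNormedAlgebra

variable (π : X → ℝ) (k : X → X → ℝ)

/-- entry evaluation as a linear map -/
def entryLM (x y : X) : Matrix X X ℝ →ₗ[ℝ] ℝ where
  toFun A := A x y
  map_add' A B := rfl
  map_smul' c A := rfl

lemma hasDerivAt_exp_entry (A : Matrix X X ℝ) (t : ℝ) (x y : X) :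
    HasDerivAt (fun u : ℝ => NormedSpace.exp (u • A) x y)
      ((A * NormedSpace.exp (t • A)) x y) t := by
  have h := hasDerivAt_exp_smul_const' (𝕂 := ℝ) A t
  exact ((entryLM x y).toContinuousLinearMap.hasFDerivAt).comp_hasDerivAt t h

lemma hasDerivAt_exp_entry' (A : Matrix X X ℝ) (t : ℝ) (x y : X) :
    HasDerivAt (fun u : ℝ => NormedSpace.exp (u • A) x y)
      ((NormedSpace.exp (t • A) * A) x y) t := by
  have h := hasDerivAt_exp_smul_const (𝕂 := ℝ) A t
  exact ((entryLM x y).toContinuousLinearMap.hasFDerivAt).comp_hasDerivAt t h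

lemma lm_exp (Ψ : Matrix X X ℝ →ₗ[ℝ] ℝ) (M : Matrix X X ℝ) :
    Ψ (NormedSpace.exp M) = ∑' n : ℕ, ((n.factorial : ℝ)⁻¹ * Ψ (M ^ n)) := by
  have hs : Summable fun n : ℕ => ((n.factorial : ℝ)⁻¹) • M ^ n := expSeries_summable' M
  have hmap := Ψ.toContinuousLinearMap.map_tsum hs
  rw [NormedSpace.exp_eq_tsum (𝕂 := ℝ)]
  simpa [map_smul, smul_eq_mul] using hmap

end ExpFacts
section ExpFacts2

open NormedSpace

attribute [local instance] Matrix.linftyOpSemiNormedRing Matrix.linftyOpNormedRing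
  Matrix.linftyOpNormedAlgebra

variable (π : X → ℝ) (k : X → X → ℝ)

lemma pow_entry_nonneg {M : Matrix X X ℝ} (h : ∀ x y, 0 ≤ M x y) :
    ∀ (n : ℕ) (x y : X), 0 ≤ (M ^ n) x y := by
  intro n
  induction n with
  | zero => intro x y; rw [pow_zero]; rw [Matrix.one_apply]; split <;> norm_num
  | succ n ih =>
      intro x y
      rw [pow_succ, Matrix.mul_apply]
      exact Finset.sum_nonneg fun z _ => mul_nonneg (ih _ _) (h _ _)

lemma exp_entry_nonneg {M : Matrix X X ℝ} (h : ∀ x y, 0 ≤ M x y) (x y : X) :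
    0 ≤ NormedSpace.exp M x y := by
  have hxy : NormedSpace.exp M x y = entryLM x y (NormedSpace.exp M) := rfl
  rw [hxy, lm_exp]
  exact tsum_nonneg fun n => mul_nonneg (by positivity)
    (pow_entry_nonneg h n x y)

/-- row sum as a linear map -/
def rowSumLM (x : X) : Matrix X X ℝ →ₗ[ℝ] ℝ where
  toFun A := ∑ y, A x y
  map_add' A B := by simp [Matrix.add_apply, Finset.sum_add_distrib]
  map_smul' c A := by simp [Matrix.smul_apply, smul_eq_mul, Finset.mul_sum]

lemma genMat_rowsum (x : X) : ∑ y, genMat π k x y = 0 := by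
  simp [genMat, Finset.sum_sub_distrib, Finset.sum_ite_eq, Finset.mem_univ]

lemma smul_genMat_pow_rowsum (s : ℝ) (n : ℕ) (x : X) :
    ∑ y, ((s • genMat π k) ^ (n + 1)) x y = 0 := by
  rw [pow_succ]
  have : ∀ y, ((s • genMat π k) ^ n * (s • genMat π k)) x y
      = ∑ z, ((s • genMat π k) ^ n) x z * (s • genMat π k) z y := fun y =>
    Matrix.mul_apply
  simp only [this]
  rw [Finset.sum_comm]
  refine Finset.sum_eq_zero fun z _ => ?_
  rw [← Finset.mul_sum]
  have : ∑ y, (s • genMat π k) z y = 0 := by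
    simp only [Matrix.smul_apply, smul_eq_mul, ← Finset.mul_sum, genMat_rowsum π k z,
      mul_zero]
  rw [this, mul_zero]

lemma exp_rowsum_one (s : ℝ) (x : X) :
    ∑ y, NormedSpace.exp (s • genMat π k) x y = 1 := by
  have hxy : ∑ y, NormedSpace.exp (s • genMat π k) x y
      = rowSumLM x (NormedSpace.exp (s • genMat π k)) := rfl
  rw [hxy, lm_exp]
  rw [tsum_eq_single 0]
  · simp [rowSumLM, pow_zero, Matrix.one_apply, Finset.sum_ite_eq, Finset.mem_univ]
  · intro n hn
    obtain ⟨m, rfl⟩ := Nat.exists_eq_succ_of_ne_zero hn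
    have : rowSumLM x ((s • genMat π k) ^ (m + 1)) = 0 := smul_genMat_pow_rowsum π k s m x
    rw [this, mul_zero]

/-- mean-with-mulVec as a linear map -/
def meanLM (f : X → ℝ) : Matrix X X ℝ →ₗ[ℝ] ℝ where
  toFun A := ∑ x, π x * A.mulVec f x
  map_add' A B := by
    simp [Matrix.add_mulVec, Pi.add_apply, mul_add, Finset.sum_add_distrib]
  map_smul' c A := by
    simp [Matrix.smul_mulVec, Pi.smul_apply, smul_eq_mul, Finset.mul_sum]
    exact Finset.sum_congr rfl fun x _ => by ring

lemma smg_mean_zero (hksymm : ∀ x y, k x y = k y x) (f : X → ℝ)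
    (hf : ∑ x, π x * f x = 0) (s : ℝ) :
    ∑ x, π x * smg π k s f x = 0 := by
  have hxy : ∑ x, π x * smg π k s f x
      = meanLM π (f) (NormedSpace.exp (s • genMat π k)) := rfl
  rw [hxy, lm_exp]
  have hzero : ∀ n : ℕ, meanLM π f ((s • genMat π k) ^ n) = 0 := by
    intro n
    cases n with
    | zero => simpa [meanLM, Matrix.one_mulVec] using hf
    | succ m =>
        have hrw : (s • genMat π k) ^ (m + 1)
            = (s • genMat π k) * (s • genMat π k) ^ m := by rw [pow_succ']
        show ∑ x, π x * ((s • genMat π k) ^ (m+1)).mulVec f x = 0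
        rw [hrw]
        have : ((s • genMat π k) * (s • genMat π k) ^ m).mulVec f
            = (s • genMat π k).mulVec (((s • genMat π k) ^ m).mulVec f) :=
          (Matrix.mulVec_mulVec _ _ _).symm
        rw [this]
        set g := ((s • genMat π k) ^ m).mulVec f
        rw [Matrix.smul_mulVec]
        simp only [Pi.smul_apply, smul_eq_mul]
        have : ∑ x, π x * (s * (genMat π k).mulVec g x)
            = s * ∑ x, π x * (genMat π k).mulVec g x := by
          rw [Finset.mul_sum]; exact Finset.sum_congr rfl fun x _ => by ring
        rw [this, sum_mulVec_zero π k hksymm g, mul_zero]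
  simp [hzero]

lemma smg_ne_zero (t : ℝ) (f : X → ℝ) (hf : f ≠ 0) : smg π k t f ≠ 0 := by
  intro h0
  apply hf
  have hcomm : Commute (-(t • genMat π k)) (t • genMat π k) :=
    (Commute.refl _).neg_left
  have hmul : NormedSpace.exp (-(t • genMat π k)) * NormedSpace.exp (t • genMat π k)
      = 1 := by
    rw [← Matrix.exp_add_of_commute _ _ hcomm, neg_add_cancel, NormedSpace.exp_zero]
  have : f = (NormedSpace.exp (-(t • genMat π k))).mulVec (smg π k t f) := by
    unfold smg
    rw [Matrix.mulVec_mulVec, hmul, Matrix.one_mulVec]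
  rw [this, h0, Matrix.mulVec_zero]

end ExpFacts2
section ExpFacts3

open NormedSpace

attribute [local instance] Matrix.linftyOpSemiNormedRing Matrix.linftyOpNormedRing
  Matrix.linftyOpNormedAlgebra

variable (π : X → ℝ) (k : X → X → ℝ)

lemma exp_entry_nonneg_t (hπpos : ∀ x, 0 < π x) (hknn : ∀ x y, 0 ≤ k x y)
    {t : ℝ} (ht : 0 ≤ t) (x y : X) :
    0 ≤ NormedSpace.exp (t • genMat π k) x y := by
  set c := Finset.univ.sup' Finset.univ_nonempty (fun x => ∑ z, k x z * π z) with hc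
  have hcge : ∀ a : X, (∑ z, k a z * π z) ≤ c := fun a =>
    Finset.le_sup' (fun x => ∑ z, k x z * π z) (Finset.mem_univ a)
  set N := t • genMat π k + (t * c) • (1 : Matrix X X ℝ) with hN
  have hNnn : ∀ a b, 0 ≤ N a b := by
    intro a b
    simp only [hN, Matrix.add_apply, Matrix.smul_apply, smul_eq_mul, Matrix.one_apply,
      genMat]
    by_cases hab : a = b
    · subst hab
      simp only [if_true]
      have h1 := mul_le_mul_of_nonneg_left (hcge a) ht
      have h2 : 0 ≤ t * (k a a * π a) := mul_nonneg ht (mul_nonneg (hknn a a) (hπpos a).le)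
      nlinarith
    · simp only [hab, if_false]
      have : 0 ≤ t * (k a b * π b) := mul_nonneg ht (mul_nonneg (hknn a b) (hπpos b).le)
      nlinarith
  have hcomm : Commute (t • genMat π k) ((t * c) • (1 : Matrix X X ℝ)) :=
    Commute.smul_right (Commute.one_right _) _
  have hexp1 : NormedSpace.exp ((t * c) • (1 : Matrix X X ℝ))
      = Real.exp (t * c) • (1 : Matrix X X ℝ) := by
    rw [← Algebra.algebraMap_eq_smul_one, ← Algebra.algebraMap_eq_smul_one, Real.exp_eq_exp_ℝ]
    exact (NormedSpace.algebraMap_exp_comm (𝕂 := ℝ) (𝔸 := Matrix X X ℝ) (t * c)).symm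
  have key : NormedSpace.exp N
      = Real.exp (t * c) • NormedSpace.exp (t • genMat π k) := by
    rw [hN, Matrix.exp_add_of_commute _ _ hcomm, hexp1, mul_smul_comm, mul_one]
  have h0 := exp_entry_nonneg hNnn x y
  rw [key] at h0
  simp only [Matrix.smul_apply, smul_eq_mul] at h0
  exact nonneg_of_mul_nonneg_right h0 (Real.exp_pos _)

end ExpFacts3

section Deriv

variable (π : X → ℝ) (k : X → X → ℝ)

lemma supNorm_smg_le (hπpos : ∀ x, 0 < π x) (hknn : ∀ x y, 0 ≤ k x y)
    (f : X → ℝ) {t : ℝ} (ht : 0 ≤ t) :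
    supNorm (smg π k t f) ≤ supNorm f := by
  apply supNorm_le
  intro x
  have hrw : smg π k t f x = ∑ y, NormedSpace.exp (t • genMat π k) x y * f y := rfl
  rw [hrw]
  calc |∑ y, NormedSpace.exp (t • genMat π k) x y * f y|
      ≤ ∑ y, |NormedSpace.exp (t • genMat π k) x y * f y| :=
        Finset.abs_sum_le_sum_abs _ _
    _ = ∑ y, NormedSpace.exp (t • genMat π k) x y * |f y| := by
        refine Finset.sum_congr rfl fun y _ => ?_
        rw [abs_mul, abs_of_nonneg (exp_entry_nonneg_t π k hπpos hknn ht x y)]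
    _ ≤ ∑ y, NormedSpace.exp (t • genMat π k) x y * supNorm f := by
        refine Finset.sum_le_sum fun y _ => ?_
        exact mul_le_mul_of_nonneg_left (abs_le_supNorm f y)
          (exp_entry_nonneg_t π k hπpos hknn ht x y)
    _ = supNorm f := by rw [← Finset.sum_mul, exp_rowsum_one π k, one_mul]

lemma hasDerivAt_smg (f : X → ℝ) (t : ℝ) (x : X) :
    HasDerivAt (fun u => smg π k u f x)
      ((genMat π k).mulVec (smg π k t f) x) t := by
  have h : ∀ y ∈ Finset.univ, HasDerivAt
      (fun u : ℝ => NormedSpace.exp (u • genMat π k) x y * f y)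
      ((genMat π k * NormedSpace.exp (t • genMat π k)) x y * f y) t := fun y _ =>
    (hasDerivAt_exp_entry (genMat π k) t x y).mul_const (f y)
  have hsum := HasDerivAt.fun_sum h
  have heq : ∑ y, (genMat π k * NormedSpace.exp (t • genMat π k)) x y * f y
      = (genMat π k).mulVec (smg π k t f) x := by
    have : (genMat π k * NormedSpace.exp (t • genMat π k)).mulVec f
        = (genMat π k).mulVec (smg π k t f) := by
      unfold smg
      rw [Matrix.mulVec_mulVec]
    exact congrFun this x
  rw [heq] at hsum
  exact hsum

lemma hasDerivAt_usq (hksymm : ∀ x y, k x y = k y x) (f : X → ℝ) (t : ℝ) :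
    HasDerivAt (fun u => ∑ x, π x * smg π k u f x ^ 2)
      (-2 * dirichletForm π k (smg π k t f) (smg π k t f)) t := by
  have hx : ∀ x ∈ Finset.univ, HasDerivAt (fun u => π x * smg π k u f x ^ 2)
      (π x * ((2 : ℕ) * smg π k t f x ^ 1 * (genMat π k).mulVec (smg π k t f) x)) t :=
    fun x _ => ((hasDerivAt_smg π k f t x).pow 2).const_mul (π x)
  have hsum := HasDerivAt.fun_sum hx
  have heq : ∑ x, π x * ((2 : ℕ) * smg π k t f x ^ 1 * (genMat π k).mulVec (smg π k t f) x)
      = -2 * dirichletForm π k (smg π k t f) (smg π k t f) := by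
    have h4 := sum_g_mulVec π k hksymm (smg π k t f)
    calc ∑ x, π x * ((2 : ℕ) * smg π k t f x ^ 1 * (genMat π k).mulVec (smg π k t f) x)
        = 2 * ∑ x, π x * (smg π k t f x * (genMat π k).mulVec (smg π k t f) x) := by
          rw [Finset.mul_sum]
          exact Finset.sum_congr rfl fun x _ => by push_cast; ring
      _ = -2 * dirichletForm π k (smg π k t f) (smg π k t f) := by rw [h4]; ring
  rw [heq] at hsum
  exact hsum

lemma usq_pos (hπpos : ∀ x, 0 < π x) {f : X → ℝ} (hf : f ≠ 0) (t : ℝ) :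
    0 < ∑ x, π x * smg π k t f x ^ 2 := by
  obtain ⟨x, hx⟩ : ∃ x, smg π k t f x ≠ 0 := by
    by_contra h
    push_neg at h
    exact smg_ne_zero π k t f hf (funext h)
  refine Finset.sum_pos' (fun y _ => mul_nonneg (hπpos y).le (sq_nonneg _))
    ⟨x, Finset.mem_univ x, ?_⟩
  exact mul_pos (hπpos x) (lt_of_le_of_ne (sq_nonneg _) (Ne.symm (pow_ne_zero 2 hx)))

end Deriv
section Kfacts

variable (π : X → ℝ) (k : X → X → ℝ)

lemma sumsq_nonneg (hπpos : ∀ x, 0 < π x) (g : X → ℝ) :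
    0 ≤ ∑ x, π x * g x ^ 2 :=
  Finset.sum_nonneg fun x _ => mul_nonneg (hπpos x).le (sq_nonneg _)

lemma Kset_nonneg (hπpos : ∀ x, 0 < π x) (hknn : ∀ x y, 0 ≤ k x y) (p : ℝ) :
    ∀ r ∈ { r : ℝ | ∃ f : X → ℝ, f ≠ 0 ∧ (∑ x, π x * f x) = 0 ∧
      r = dirichletForm π k f f * supNorm f ^ ((4 - 2 * p) / p) /
        (∑ x, π x * (f x) ^ 2) ^ (2 / p) }, 0 ≤ r := by
  rintro r ⟨g, hg, hm, rfl⟩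
  exact div_nonneg (mul_nonneg (dirichletForm_nonneg π hπpos k hknn g)
    (Real.rpow_nonneg (supNorm_nonneg g) _))
    (Real.rpow_nonneg (sumsq_nonneg π hπpos g) _)

lemma Kconst_nonneg (hπpos : ∀ x, 0 < π x) (hknn : ∀ x y, 0 ≤ k x y) (p : ℝ) :
    0 ≤ Kconst π k p :=
  Real.sInf_nonneg (Kset_nonneg π k hπpos hknn p)

lemma Kconst_le (hπpos : ∀ x, 0 < π x) (hknn : ∀ x y, 0 ≤ k x y) (p : ℝ)
    {g : X → ℝ} (hg : g ≠ 0) (hm : ∑ x, π x * g x = 0) :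
    Kconst π k p ≤ dirichletForm π k g g * supNorm g ^ ((4 - 2 * p) / p) /
      (∑ x, π x * (g x) ^ 2) ^ (2 / p) :=
  csInf_le ⟨0, Kset_nonneg π k hπpos hknn p⟩ ⟨g, hg, hm, rfl⟩

lemma dirichletForm_smul (c : ℝ) (g : X → ℝ) :
    dirichletForm π k (c • g) (c • g) = c ^ 2 * dirichletForm π k g g := by
  unfold dirichletForm
  have h : ∀ x y : X, ((c • g) x - (c • g) y) * ((c • g) x - (c • g) y) * k x y * π x * π y
      = c ^ 2 * ((g x - g y) * (g x - g y) * k x y * π x * π y) := by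
    intro x y
    simp only [Pi.smul_apply, smul_eq_mul]
    ring
  simp only [h, ← Finset.mul_sum]
  ring

lemma sumsq_smul (c : ℝ) (g : X → ℝ) :
    ∑ x, π x * ((c • g) x) ^ 2 = c ^ 2 * ∑ x, π x * g x ^ 2 := by
  rw [Finset.mul_sum]
  refine Finset.sum_congr rfl fun x _ => ?_
  simp only [Pi.smul_apply, smul_eq_mul]
  ring

lemma reach_const {G : SimpleGraph X} {g : X → ℝ} (hadj : ∀ a b, G.Adj a b → g a = g b) :
    ∀ {x y : X}, G.Reachable x y → g x = g y := by
  intro x y h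
  obtain ⟨w⟩ := h
  induction w with
  | nil => rfl
  | cons ha _ ih => exact (hadj _ _ ha).trans ih

lemma dirichletForm_pos (hπpos : ∀ x, 0 < π x) (hπ1 : ∑ x, π x = 1)
    (hknn : ∀ x y, 0 ≤ k x y)
    (hconn : (SimpleGraph.fromRel fun x y => k x y ≠ 0).Connected)
    {g : X → ℝ} (hm : ∑ x, π x * g x = 0) (hg : g ≠ 0) :
    0 < dirichletForm π k g g := by
  rcases (dirichletForm_nonneg π hπpos k hknn g).lt_or_eq with h | h
  · exact h
  exfalso
  have hterm : ∀ x y : X, (g x - g y) * (g x - g y) * k x y * π x * π y = 0 := by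
    have hS : ∑ x, ∑ y, (g x - g y) * (g x - g y) * k x y * π x * π y = 0 := by
      have := h.symm
      unfold dirichletForm at this
      linarith
    have hnn : ∀ x y : X, 0 ≤ (g x - g y) * (g x - g y) * k x y * π x * π y := fun x y =>
      mul_nonneg (mul_nonneg (mul_nonneg (mul_self_nonneg _) (hknn x y)) (hπpos x).le)
        (hπpos y).le
    intro x y
    have hx := (Finset.sum_eq_zero_iff_of_nonneg
      (fun x _ => Finset.sum_nonneg fun y _ => hnn x y)).1 hS x (Finset.mem_univ x)
    exact (Finset.sum_eq_zero_iff_of_nonneg (fun y _ => hnn x y)).1 hx y (Finset.mem_univ y)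
  have hadj : ∀ x y : X, k x y ≠ 0 → g x = g y := by
    intro x y hk
    by_contra hne
    have h1 : 0 < (g x - g y) * (g x - g y) :=
      mul_self_pos.2 (sub_ne_zero.2 hne)
    have h2 : 0 < k x y := lt_of_le_of_ne (hknn x y) (Ne.symm hk)
    have hpos : 0 < (g x - g y) * (g x - g y) * k x y * π x * π y :=
      mul_pos (mul_pos (mul_pos h1 h2) (hπpos x)) (hπpos y)
    exact absurd (hterm x y) (ne_of_gt hpos)
  have hconst : ∀ x y : X, g x = g y := by
    intro x y
    refine reach_const ?_ (hconn.preconnected x y)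
    intro a b hab
    rw [SimpleGraph.fromRel_adj] at hab
    exact hab.2.elim (hadj a b) fun h' => (hadj b a h').symm
  apply hg
  funext x
  have : ∑ y, π y * g y = ∑ y, π y * g x := Finset.sum_congr rfl fun y _ => by
    rw [hconst y x]
  rw [hm] at this
  rw [← Finset.sum_mul, hπ1, one_mul] at this
  simpa using this.symm

lemma Kconst_pos (hπpos : ∀ x, 0 < π x) (hπ1 : ∑ x, π x = 1)
    (hknn : ∀ x y, 0 ≤ k x y)
    (hconn : (SimpleGraph.fromRel fun x y => k x y ≠ 0).Connected)
    {p : ℝ} (hp0 : 0 < p)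
    {f : X → ℝ} (hf0 : f ≠ 0) (hfm : ∑ x, π x * f x = 0) :
    0 < Kconst π k p := by
  classical
  set N : (X → ℝ) → ℝ := fun g => ∑ x, π x * g x ^ 2 with hNdef
  set E : (X → ℝ) → ℝ := fun g => dirichletForm π k g g with hEdef
  set Q : (X → ℝ) → ℝ := fun g => E g / (N g) ^ (2 / p) with hQdef
  set C : Set (X → ℝ) := {g | (∑ x, π x * g x) = 0 ∧ ‖g‖ = 1} with hCdef
  have hNcont : Continuous N :=
    continuous_finset_sum _ fun x _ => continuous_const.mul ((continuous_apply x).pow 2)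
  have hEcont : Continuous E := by
    refine continuous_const.mul (continuous_finset_sum _ fun x _ =>
      continuous_finset_sum _ fun y _ => ?_)
    exact (((((continuous_apply x).sub (continuous_apply y)).mul
      ((continuous_apply x).sub (continuous_apply y))).mul continuous_const).mul
      continuous_const).mul continuous_const
  have hCclosed : IsClosed C := by
    have h1 : IsClosed ((fun g : X → ℝ => ∑ x, π x * g x) ⁻¹' {0}) :=
      IsClosed.preimage (continuous_finset_sum _ fun x _ =>
        continuous_const.mul (continuous_apply x)) isClosed_singleton
    have h2 : IsClosed ((fun g : X → ℝ => ‖g‖) ⁻¹' {1}) :=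
      IsClosed.preimage continuous_norm isClosed_singleton
    exact h1.inter h2
  have hCbdd : Bornology.IsBounded C := by
    refine (Metric.isBounded_closedBall (x := (0 : X → ℝ)) (r := 1)).subset ?_
    intro g hg
    rw [Metric.mem_closedBall, dist_zero_right]
    exact le_of_eq hg.2
  have hCcomp : IsCompact C := Metric.isCompact_of_isClosed_isBounded hCclosed hCbdd
  have hfnorm : (0:ℝ) < ‖f‖ := norm_pos_iff.2 hf0
  have hmem : ∀ g : X → ℝ, g ≠ 0 → (∑ x, π x * g x) = 0 → ‖g‖⁻¹ • g ∈ C := by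
    intro g hg hm
    constructor
    · have : ∑ x, π x * (‖g‖⁻¹ • g) x = ‖g‖⁻¹ * ∑ x, π x * g x := by
        rw [Finset.mul_sum]
        exact Finset.sum_congr rfl fun x _ => by
          simp only [Pi.smul_apply, smul_eq_mul]; ring
      rw [this, hm, mul_zero]
    · rw [norm_smul, norm_inv, norm_norm, inv_mul_cancel₀ (norm_pos_iff.2 hg).ne']
  have hCne : C.Nonempty := ⟨‖f‖⁻¹ • f, hmem f hf0 hfm⟩
  have hNpos : ∀ g ∈ C, 0 < N g := by
    intro g hg
    have hgne : g ≠ 0 := by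
      intro h0
      have h2 : ‖g‖ = 1 := hg.2
      rw [h0, norm_zero] at h2
      exact one_ne_zero h2.symm
    obtain ⟨x, hx⟩ : ∃ x, g x ≠ 0 := by
      by_contra hc; push_neg at hc; exact hgne (funext hc)
    refine Finset.sum_pos' (fun y _ => mul_nonneg (hπpos y).le (sq_nonneg _))
      ⟨x, Finset.mem_univ x, ?_⟩
    exact mul_pos (hπpos x) (lt_of_le_of_ne (sq_nonneg _) (Ne.symm (pow_ne_zero 2 hx)))
  have hQcont : ContinuousOn Q C := by
    refine ContinuousOn.div hEcont.continuousOn ?_ ?_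
    · intro g hg
      exact ((Real.continuousAt_rpow_const (N g) (2 / p)
        (Or.inl (hNpos g hg).ne')).comp hNcont.continuousAt).continuousWithinAt
    · exact fun g hg => (Real.rpow_pos_of_pos (hNpos g hg) _).ne'
  obtain ⟨g₀, hg₀C, hmin⟩ := hCcomp.exists_isMinOn hCne hQcont
  have hg₀ne : g₀ ≠ 0 := by
    intro h0
    have h2 : ‖g₀‖ = 1 := hg₀C.2
    rw [h0, norm_zero] at h2
    exact one_ne_zero h2.symm
  have hQ₀pos : 0 < Q g₀ :=
    div_pos (dirichletForm_pos π k hπpos hπ1 hknn hconn hg₀C.1 hg₀ne)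
      (Real.rpow_pos_of_pos (hNpos g₀ hg₀C) _)
  refine lt_of_lt_of_le hQ₀pos (le_csInf ⟨_, ⟨f, hf0, hfm, rfl⟩⟩ ?_)
  rintro r ⟨g, hgne, hgm, rfl⟩
  have hs : (0:ℝ) < ‖g‖ := norm_pos_iff.2 hgne
  have hgC2 : ‖g‖⁻¹ • g ∈ C := hmem g hgne hgm
  have hNg : 0 < N g := by
    obtain ⟨x, hx⟩ : ∃ x, g x ≠ 0 := by
      by_contra hc; push_neg at hc; exact hgne (funext hc)
    refine Finset.sum_pos' (fun y _ => mul_nonneg (hπpos y).le (sq_nonneg _))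
      ⟨x, Finset.mem_univ x, ?_⟩
    exact mul_pos (hπpos x) (lt_of_le_of_ne (sq_nonneg _) (Ne.symm (pow_ne_zero 2 hx)))
  have hw : (0:ℝ) < (‖g‖⁻¹) ^ 2 := by positivity
  have hscale : Q (‖g‖⁻¹ • g)
      = E g * supNorm g ^ ((4 - 2 * p) / p) / (N g) ^ (2 / p) := by
    have hE : E (‖g‖⁻¹ • g) = (‖g‖⁻¹) ^ 2 * E g := dirichletForm_smul π k ‖g‖⁻¹ g
    have hNs : N (‖g‖⁻¹ • g) = (‖g‖⁻¹) ^ 2 * N g := sumsq_smul π ‖g‖⁻¹ g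
    have hsupg : supNorm g = ‖g‖ := supNorm_eq_norm g
    have hinv2 : (‖g‖⁻¹) ^ 2 = ‖g‖ ^ (-2 : ℝ) := by
      rw [Real.rpow_neg hs.le]
      rw [show ((2:ℝ)) = ((2:ℕ):ℝ) by norm_num, Real.rpow_natCast, inv_pow]
    have hmulr : ((‖g‖⁻¹) ^ 2 * N g) ^ (2 / p)
        = ((‖g‖⁻¹) ^ 2) ^ (2 / p) * (N g) ^ (2 / p) :=
      Real.mul_rpow (sq_nonneg _) hNg.le
    have hkey : ((‖g‖⁻¹) ^ 2) / ((‖g‖⁻¹) ^ 2) ^ (2 / p) = ‖g‖ ^ ((4 - 2 * p) / p) := by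
      rw [hinv2, ← Real.rpow_mul hs.le, ← Real.rpow_sub hs]
      congr 1
      field_simp
      ring
    have hwp : (0:ℝ) < ((‖g‖⁻¹) ^ 2) ^ (2 / p) := Real.rpow_pos_of_pos hw _
    have hNp : (0:ℝ) < (N g) ^ (2 / p) := Real.rpow_pos_of_pos hNg _
    show E (‖g‖⁻¹ • g) / (N (‖g‖⁻¹ • g)) ^ (2 / p)
        = E g * supNorm g ^ ((4 - 2 * p) / p) / (N g) ^ (2 / p)
    rw [hE, hNs, hmulr, hsupg, ← hkey]
    field_simp
  exact hscale ▸ (hmin hgC2)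

end Kfacts
end Aux

open Aux in
theorem statement2 {X : Type} [Fintype X] [DecidableEq X] [Nonempty X]
    (π : X → ℝ) (hπpos : ∀ x, 0 < π x) (hπ1 : ∑ x, π x = 1)
    (k : X → X → ℝ) (hknn : ∀ x y, 0 ≤ k x y) (hksymm : ∀ x y, k x y = k y x)
    (hconn : (SimpleGraph.fromRel fun x y => k x y ≠ 0).Connected)
    (p : ℝ) (hp : p ∈ Set.Ioc (0 : ℝ) 1)
    (f : X → ℝ) (hf : ∑ x, π x * f x = 0) (t : ℝ) (ht : 0 < t) :
    ∑ x, π x * (smg π k t f x) ^ 2 ≤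
      ((4 - 2 * p) / p) ^ (-(p / (2 - p))) * (Kconst π k p * t) ^ (-(p / (2 - p))) *
        supNorm f ^ 2 := by
  obtain ⟨hp0, hp1⟩ := hp
  have hp2 : (0:ℝ) < 2 - p := by linarith
  by_cases hf0 : f = 0
  · subst hf0
    have hz : ∀ x, smg π k t (0 : X → ℝ) x = 0 := by
      intro x
      unfold smg
      rw [Matrix.mulVec_zero]
      rfl
    have hzs : ∑ x, π x * (smg π k t (0 : X → ℝ) x) ^ 2 = 0 := by
      simp [hz]
    rw [hzs]
    have hA : (0:ℝ) ≤ ((4 - 2 * p) / p) ^ (-(p / (2 - p))) :=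
      Real.rpow_nonneg (div_nonneg (by linarith) hp0.le) _
    have hB : (0:ℝ) ≤ (Kconst π k p * t) ^ (-(p / (2 - p))) :=
      Real.rpow_nonneg (mul_nonneg (Kconst_nonneg π k hπpos hknn p) ht.le) _
    have hC : (0:ℝ) ≤ supNorm (0 : X → ℝ) ^ 2 := sq_nonneg _
    positivity
  -- main case
  set q : ℝ := p / (2 - p) with hqdef
  set β : ℝ := (2 - p) / p with hβdef
  set a : ℝ := (4 - 2 * p) / p with hadef
  have hβpos : 0 < β := div_pos hp2 hp0
  have ha0 : 0 ≤ a := div_nonneg (by linarith) hp0.le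
  have hSf : 0 < supNorm f := supNorm_pos hf0
  have hSfa : 0 < supNorm f ^ a := Real.rpow_pos_of_pos hSf _
  have hK : 0 < Kconst π k p := Kconst_pos π k hπpos hπ1 hknn hconn hp0 hf0 hf
  set u : ℝ → ℝ := fun s => ∑ x, π x * smg π k s f x ^ 2 with hudef
  have hupos : ∀ s, 0 < u s := fun s => usq_pos π k hπpos hf0 s
  have hu' : ∀ s, HasDerivAt u
      (-2 * dirichletForm π k (smg π k s f) (smg π k s f)) s := fun s =>
    hasDerivAt_usq π k hksymm f s
  set cc : ℝ := 2 * β * Kconst π k p / supNorm f ^ a with hccdef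
  have hcc : 0 < cc := div_pos (mul_pos (by linarith) hK) hSfa
  have hEbound : ∀ s, 0 ≤ s →
      Kconst π k p * (u s) ^ (2 / p) / supNorm f ^ a
        ≤ dirichletForm π k (smg π k s f) (smg π k s f) := by
    intro s hs
    set g : X → ℝ := smg π k s f with hgdef
    have hgne : g ≠ 0 := smg_ne_zero π k s f hf0
    have hgm : ∑ x, π x * g x = 0 := smg_mean_zero π k hksymm f hf s
    have hKle := Kconst_le π k hπpos hknn p hgne hgm
    have hNb : 0 < (∑ x, π x * g x ^ 2) ^ (2 / p) :=
      Real.rpow_pos_of_pos (hupos s) _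
    have step1 : Kconst π k p * (u s) ^ (2 / p)
        ≤ dirichletForm π k g g * supNorm g ^ a := (le_div_iff₀ hNb).mp hKle
    have hSga : supNorm g ^ a ≤ supNorm f ^ a :=
      Real.rpow_le_rpow (supNorm_nonneg g) (supNorm_smg_le π k hπpos hknn f hs) ha0
    have step2 : dirichletForm π k g g * supNorm g ^ a
        ≤ dirichletForm π k g g * supNorm f ^ a :=
      mul_le_mul_of_nonneg_left hSga (dirichletForm_nonneg π hπpos k hknn g)
    exact (div_le_iff₀ hSfa).mpr (step1.trans step2)
  set w : ℝ → ℝ := fun s => u s ^ (-β : ℝ) with hwdef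
  have hw' : ∀ s, HasDerivAt w
      ((-2 * dirichletForm π k (smg π k s f) (smg π k s f)) * (-β)
        * u s ^ (-β - 1)) s := fun s =>
    (hu' s).rpow_const (Or.inl (hupos s).ne')
  have hw'ge : ∀ s, 0 ≤ s →
      cc ≤ (-2 * dirichletForm π k (smg π k s f) (smg π k s f)) * (-β)
        * u s ^ (-β - 1) := by
    intro s hs
    have hub : 0 < u s ^ (-β - 1 : ℝ) := Real.rpow_pos_of_pos (hupos s) _
    have h1 := hEbound s hs
    have h2 : 2 * β * (Kconst π k p * (u s) ^ (2 / p) / supNorm f ^ a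
          * u s ^ (-β - 1 : ℝ))
        ≤ 2 * β * (dirichletForm π k (smg π k s f) (smg π k s f)
          * u s ^ (-β - 1 : ℝ)) :=
      mul_le_mul_of_nonneg_left (mul_le_mul_of_nonneg_right h1 hub.le)
        (by positivity)
    have hexp : (u s) ^ (2 / p) * u s ^ (-β - 1 : ℝ) = 1 := by
      rw [← Real.rpow_add (hupos s)]
      have : 2 / p + (-β - 1) = 0 := by
        rw [hβdef]
        field_simp
        ring
      rw [this, Real.rpow_zero]
    have h3 : 2 * β * (Kconst π k p * (u s) ^ (2 / p) / supNorm f ^ a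
        * u s ^ (-β - 1 : ℝ)) = cc := by
      rw [hccdef]
      have : Kconst π k p * (u s) ^ (2 / p) / supNorm f ^ a * u s ^ (-β - 1 : ℝ)
          = Kconst π k p / supNorm f ^ a * ((u s) ^ (2 / p) * u s ^ (-β - 1 : ℝ)) := by
        ring
      rw [this, hexp, mul_one]
      ring
    calc cc = 2 * β * (Kconst π k p * (u s) ^ (2 / p) / supNorm f ^ a
          * u s ^ (-β - 1 : ℝ)) := h3.symm
      _ ≤ 2 * β * (dirichletForm π k (smg π k s f) (smg π k s f)
          * u s ^ (-β - 1 : ℝ)) := h2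
      _ = (-2 * dirichletForm π k (smg π k s f) (smg π k s f)) * (-β)
          * u s ^ (-β - 1) := by ring
  set h : ℝ → ℝ := fun s => w s - cc * s with hhdef
  have hh' : ∀ s, HasDerivAt h
      ((-2 * dirichletForm π k (smg π k s f) (smg π k s f)) * (-β)
        * u s ^ (-β - 1) - cc) s := by
    intro s
    have hlin : HasDerivAt (fun s : ℝ => cc * s) cc s := by
      simpa using (hasDerivAt_id s).const_mul cc
    exact (hw' s).sub hlin
  have hdiff : Differentiable ℝ h := fun s => (hh' s).differentiableAt
  have hmono : MonotoneOn h (Set.Ici (0:ℝ)) := by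
    refine monotoneOn_of_deriv_nonneg (convex_Ici 0) hdiff.continuous.continuousOn
      (hdiff.differentiableOn) ?_
    intro s hs
    rw [interior_Ici] at hs
    rw [(hh' s).deriv]
    have := hw'ge s (le_of_lt hs)
    linarith
  have hle : h 0 ≤ h t := hmono (Set.self_mem_Ici) (Set.mem_Ici.mpr ht.le) ht.le
  have hw0 : 0 < w 0 := Real.rpow_pos_of_pos (hupos 0) _
  have hwt : cc * t ≤ w t := by
    have h0 : h 0 = w 0 := by rw [hhdef]; simp
    have h1 : h t = w t - cc * t := rfl
    rw [h0, h1] at hle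
    linarith
  have hcct : 0 < cc * t := mul_pos hcc ht
  -- invert the rpow
  have hinv : β⁻¹ = q := by
    rw [hβdef, hqdef, inv_div]
  have hpne : p ≠ 0 := hp0.ne'
  have hmain : u t ≤ (cc * t) ^ (-q : ℝ) := by
    have hz : -(β⁻¹) ≤ (0:ℝ) := neg_nonpos.mpr (inv_nonneg.mpr hβpos.le)
    have happ := Real.rpow_le_rpow_of_nonpos hcct hwt hz
    rw [hinv] at happ
    have hlhs : (u t ^ (-β : ℝ)) ^ (-q : ℝ) = u t := by
      rw [← Real.rpow_mul (hupos t).le]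
      rw [show (-β) * (-q) = 1 by
        rw [← hinv, neg_mul_neg]; exact mul_inv_cancel₀ hβpos.ne']
      exact Real.rpow_one _
    calc u t = (u t ^ (-β : ℝ)) ^ (-q : ℝ) := hlhs.symm
      _ ≤ (cc * t) ^ (-q : ℝ) := happ
  have hfinal : (cc * t) ^ (-q : ℝ)
      = a ^ (-q : ℝ) * (Kconst π k p * t) ^ (-q : ℝ) * supNorm f ^ 2 := by
    have h2b : 2 * β = a := by rw [hβdef, hadef]; ring
    have hrw : cc * t = a * (Kconst π k p * t) * (supNorm f ^ a)⁻¹ := by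
      rw [hccdef, h2b]; ring
    rw [hrw]
    have hKt : (0:ℝ) ≤ Kconst π k p * t := mul_nonneg hK.le ht.le
    have h1 : (a * (Kconst π k p * t) * (supNorm f ^ a)⁻¹) ^ (-q : ℝ)
        = (a * (Kconst π k p * t)) ^ (-q : ℝ) * ((supNorm f ^ a)⁻¹) ^ (-q : ℝ) :=
      Real.mul_rpow (mul_nonneg ha0 hKt) (inv_nonneg.mpr hSfa.le)
    have h2 : (a * (Kconst π k p * t)) ^ (-q : ℝ)
        = a ^ (-q : ℝ) * (Kconst π k p * t) ^ (-q : ℝ) := Real.mul_rpow ha0 hKt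
    have h3 : ((supNorm f ^ a)⁻¹) ^ (-q : ℝ) = supNorm f ^ 2 := by
      have hneg : (supNorm f ^ a)⁻¹ = supNorm f ^ (-a : ℝ) :=
        (Real.rpow_neg hSf.le a).symm
      rw [hneg, ← Real.rpow_mul hSf.le]
      have hexp2 : (-a) * (-q) = 2 := by
        rw [hadef, hqdef]
        field_simp
        ring
      rw [hexp2, show ((2:ℝ)) = ((2:ℕ):ℝ) by norm_num, Real.rpow_natCast]
    rw [h1, h2, h3]
  exact le_trans hmain (le_of_eq hfinal)

end
end

section
/- Let p ∈ (0,1) and let λ : 𝒳 → (0,∞) and μ : 𝒳 → (0,∞) be two positive functions. Then for every probability measure η on 𝒳, 1/L_η(p) ≤ 2^{2/p − 1} · ( Σ_x π(x) λ(x)^{p/(1−p)} · Σ_y η(y) μ(y)^{p/(1−p)} )^{(2−2p)/p} · ( Σ_{e : Q(e) ≠ 0} (1/Q(e)) · ( Σ_{x,y : e ∈ γ(x,y)} π(x)η(y)/(λ(x)μ(y)) )² ). -/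
open scoped BigOperators

noncomputable section

/-- The generalized Poincaré constant `L_η(p)`. -/
def genPoincare {X : Type} [Fintype X] (π : X → ℝ) (k : X → X → ℝ)
    (η : X → ℝ) (p : ℝ) : ℝ :=
  sInf { r : ℝ | ∃ f : X → ℝ, f ≠ 0 ∧ (∑ x, π x * f x) = 0 ∧ (∑ x, η x * |f x|) ≠ 0 ∧
    r = dirichletForm π k f f * supNorm f ^ ((2 - 2 * p) / p) /
      (∑ x, η x * |f x|) ^ (2 / p) }

/-- The (ordered) edges of a path given as its list of successive vertices. -/
def pathEdges {X : Type} (l : List X) : List (X × X) := l.zip l.tail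

/-- The weight `Q(e) = k(x,y) π(x) π(y)` of an edge `e = (x,y)`. -/
def Qw {X : Type} (π : X → ℝ) (k : X → X → ℝ) (e : X × X) : ℝ :=
  k e.1 e.2 * π e.1 * π e.2

lemma pathEdges_cons_cons {X : Type} (a b : X) (t : List X) :
    pathEdges (a :: b :: t) = (a, b) :: pathEdges (b :: t) := rfl

lemma fst_mem_of_mem_pathEdges {X : Type} {e : X × X} {l : List X}
    (h : e ∈ pathEdges l) : e.1 ∈ l := by
  obtain ⟨e1, e2⟩ := e
  exact (List.of_mem_zip h).1

lemma mem_pathEdges_iff_infix {X : Type} (e : X × X) :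
    ∀ l : List X, e ∈ pathEdges l ↔ [e.1, e.2] <:+: l := by
  intro l
  induction l with
  | nil => simp [pathEdges]
  | cons a t ih =>
    cases t with
    | nil =>
      constructor
      · intro h; simp [pathEdges] at h
      · intro h; exfalso; have := h.length_le; simp at this
    | cons b t' =>
      rw [pathEdges_cons_cons, List.mem_cons, ih]
      constructor
      · rintro (rfl | h)
        · exact ⟨[], t', by simp⟩
        · exact h.trans (List.suffix_cons a (b :: t')).isInfix
      · intro h
        rcases List.infix_cons_iff.1 h with hp | hi
        · left
          rw [List.cons_prefix_cons] at hp
          obtain ⟨h1, h2⟩ := hp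
          rw [List.cons_prefix_cons] at h2
          exact Prod.ext h1 h2.1
        · exact Or.inr hi

lemma telescope {X : Type} (f : X → ℝ) :
    ∀ (l : List X) (x y : X), l.head? = some x → l.getLast? = some y →
      f y - f x = ((pathEdges l).map fun e => f e.2 - f e.1).sum := by
  intro l
  induction l with
  | nil => intro x y h; simp at h
  | cons a t ih =>
    intro x y hh hl
    simp only [List.head?_cons, Option.some.injEq] at hh
    subst hh
    cases t with
    | nil =>
      simp only [List.getLast?_singleton, Option.some.injEq] at hl
      subst hl
      simp [pathEdges]
    | cons b t' =>
      rw [List.getLast?_cons_cons] at hl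
      have := ih (x := b) y rfl hl
      rw [pathEdges_cons_cons, List.map_cons, List.sum_cons, ← this]
      ring

lemma nodup_pathEdges {X : Type} : ∀ l : List X, l.Nodup → (pathEdges l).Nodup := by
  intro l
  induction l with
  | nil => simp [pathEdges]
  | cons a t ih =>
    intro h
    cases t with
    | nil => simp [pathEdges]
    | cons b t' =>
      rw [pathEdges_cons_cons, List.nodup_cons]
      refine ⟨fun hmem => ?_, ih h.of_cons⟩
      have : a ∈ b :: t' := fst_mem_of_mem_pathEdges hmem
      exact (List.nodup_cons.1 h).1 this

lemma extract {X : Type} [DecidableEq X] :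
    ∀ (n : ℕ) (l : List X), l.length ≤ n → ∀ x y, l.head? = some x → l.getLast? = some y →
      ∃ l' : List X, l'.head? = some x ∧ l'.getLast? = some y ∧ l'.Nodup ∧
        (∀ v ∈ l', v ∈ l) ∧ (∀ e ∈ pathEdges l', e ∈ pathEdges l) := by
  intro n
  induction n with
  | zero =>
    intro l hl x y hh _
    rw [Nat.le_zero, List.length_eq_zero_iff] at hl
    subst hl
    simp at hh
  | succ n ih =>
    intro l hl x y hh hlast
    cases l with
    | nil => simp at hh
    | cons a t =>
      simp only [List.head?_cons, Option.some.injEq] at hh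
      subst hh
      by_cases ha : a ∈ t
      · obtain ⟨t1, t2, rfl⟩ := List.append_of_mem ha
        have hlen : (a :: t2).length ≤ n := by
          simp only [List.length_cons, List.length_append] at hl ⊢
          omega
        have hlast2 : (a :: t2).getLast? = some y := by
          have : a :: (t1 ++ a :: t2) = (a :: t1) ++ (a :: t2) := by simp
          rw [this, List.getLast?_append_of_ne_nil _ (by simp)] at hlast
          exact hlast
        obtain ⟨l', h1, h2, h3, h4, h5⟩ := ih (a :: t2) hlen a y rfl hlast2
        refine ⟨l', h1, h2, h3, fun v hv => ?_, fun e he => ?_⟩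
        · have := h4 v hv
          simp only [List.mem_cons, List.mem_append] at this ⊢
          tauto
        · have := h5 e he
          rw [mem_pathEdges_iff_infix] at this ⊢
          refine this.trans ?_
          exact ⟨a :: t1, [], by simp⟩
      · cases t with
        | nil =>
          simp only [List.getLast?_singleton, Option.some.injEq] at hlast
          subst hlast
          exact ⟨[a], rfl, rfl, by simp, by simp, by simp [pathEdges]⟩
        | cons b t' =>
          rw [List.getLast?_cons_cons] at hlast
          have hlen : (b :: t').length ≤ n := by simp at hl ⊢; omega
          obtain ⟨l', h1, h2, h3, h4, h5⟩ := ih (b :: t') hlen b y rfl hlast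
          cases l' with
          | nil => simp at h1
          | cons b' t'' =>
            simp only [List.head?_cons, Option.some.injEq] at h1
            have hanot : a ∉ b' :: t'' := fun hmem => ha (h4 a hmem)
            refine ⟨a :: b' :: t'', rfl, ?_, ?_, ?_, ?_⟩
            · rw [List.getLast?_cons_cons]; exact h2
            · exact List.nodup_cons.2 ⟨hanot, h3⟩
            · intro v hv
              rcases List.mem_cons.1 hv with rfl | hv
              · exact List.mem_cons_self
              · exact List.mem_cons_of_mem _ (h4 v hv)
            · intro e he
              rw [pathEdges_cons_cons] at he
              rcases List.mem_cons.1 he with rfl | he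
              · rw [pathEdges_cons_cons, h1]
                exact List.mem_cons_self
              · have h6 := h5 e he
                have h7 : e ∈ pathEdges (b :: t') := h1 ▸ h6
                rw [mem_pathEdges_iff_infix] at h7 ⊢
                exact h7.trans ⟨[a], [], by simp⟩

lemma abs_sub_le_sum_pathEdges {X : Type} [DecidableEq X] (f : X → ℝ) (l : List X) (x y : X)
    (hh : l.head? = some x) (hl : l.getLast? = some y) :
    |f y - f x| ≤ ∑ e ∈ (pathEdges l).toFinset, |f e.2 - f e.1| := by
  obtain ⟨l', h1, h2, h3, -, h5⟩ := extract l.length l le_rfl x y hh hl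
  have hnd := nodup_pathEdges l' h3
  have ht := telescope f l' x y h1 h2
  rw [← List.sum_toFinset _ hnd] at ht
  calc |f y - f x| = |∑ e ∈ (pathEdges l').toFinset, (f e.2 - f e.1)| := by rw [ht]
    _ ≤ ∑ e ∈ (pathEdges l').toFinset, |f e.2 - f e.1| := Finset.abs_sum_le_sum_abs _ _
    _ ≤ ∑ e ∈ (pathEdges l).toFinset, |f e.2 - f e.1| := by
        apply Finset.sum_le_sum_of_subset_of_nonneg
        · intro e he
          rw [List.mem_toFinset] at he ⊢
          exact h5 e he
        · intro _ _ _; exact abs_nonneg _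


lemma holder_two {ι : Type} (s : Finset ι) (u v : ι → ℝ) (hu : ∀ i, 0 ≤ u i)
    (hv : ∀ i, 0 ≤ v i) {p : ℝ} (hp0 : 0 < p) (hp1 : p < 1) :
    ∑ i ∈ s, u i ^ p * v i ^ (1 - p) ≤ (∑ i ∈ s, u i) ^ p * (∑ i ∈ s, v i) ^ (1 - p) := by
  have h1p : (0:ℝ) < 1 - p := by linarith
  set U := ∑ i ∈ s, u i with hUdef
  set V := ∑ i ∈ s, v i with hVdef
  have hUnn : 0 ≤ U := Finset.sum_nonneg fun i _ => hu i
  have hVnn : 0 ≤ V := Finset.sum_nonneg fun i _ => hv i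
  rcases hUnn.eq_or_lt.imp Eq.symm id with hU0 | hUpos
  · have hz : ∀ i ∈ s, u i = 0 :=
      (Finset.sum_eq_zero_iff_of_nonneg (fun j _ => hu j)).1 hU0
    have : ∑ i ∈ s, u i ^ p * v i ^ (1 - p) = 0 := Finset.sum_eq_zero fun i hi => by
      rw [hz i hi, Real.zero_rpow hp0.ne', zero_mul]
    rw [this]
    positivity
  rcases hVnn.eq_or_lt.imp Eq.symm id with hV0 | hVpos
  · have hz : ∀ i ∈ s, v i = 0 :=
      (Finset.sum_eq_zero_iff_of_nonneg (fun j _ => hv j)).1 hV0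
    have : ∑ i ∈ s, u i ^ p * v i ^ (1 - p) = 0 := Finset.sum_eq_zero fun i hi => by
      rw [hz i hi, Real.zero_rpow h1p.ne', mul_zero]
    rw [this]
    positivity
  have hUp : (0:ℝ) < U ^ p := Real.rpow_pos_of_pos hUpos p
  have hVp : (0:ℝ) < V ^ (1 - p) := Real.rpow_pos_of_pos hVpos (1 - p)
  have key : ∀ i ∈ s, u i ^ p * v i ^ (1 - p) ≤
      (p * (u i / U) + (1 - p) * (v i / V)) * (U ^ p * V ^ (1 - p)) := by
    intro i _
    have hgm := Real.geom_mean_le_arith_mean2_weighted hp0.le h1p.le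
      (div_nonneg (hu i) hUnn) (div_nonneg (hv i) hVnn) (by ring)
    have hexp : (u i / U) ^ p * (v i / V) ^ (1 - p) * (U ^ p * V ^ (1 - p)) =
        u i ^ p * v i ^ (1 - p) := by
      rw [Real.div_rpow (hu i) hUnn, Real.div_rpow (hv i) hVnn]
      field_simp
    calc u i ^ p * v i ^ (1 - p)
        = (u i / U) ^ p * (v i / V) ^ (1 - p) * (U ^ p * V ^ (1 - p)) := hexp.symm
      _ ≤ (p * (u i / U) + (1 - p) * (v i / V)) * (U ^ p * V ^ (1 - p)) := by
          apply mul_le_mul_of_nonneg_right hgm (by positivity)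
  calc ∑ i ∈ s, u i ^ p * v i ^ (1 - p)
      ≤ ∑ i ∈ s, (p * (u i / U) + (1 - p) * (v i / V)) * (U ^ p * V ^ (1 - p)) :=
        Finset.sum_le_sum key
    _ = (p * (U / U) + (1 - p) * (V / V)) * (U ^ p * V ^ (1 - p)) := by
        rw [← Finset.sum_mul]
        congr 1
        rw [Finset.sum_add_distrib, ← Finset.mul_sum, ← Finset.mul_sum,
          ← Finset.sum_div, ← Finset.sum_div]
    _ = U ^ p * V ^ (1 - p) := by
        rw [div_self hUpos.ne', div_self hVpos.ne']
        ring

lemma key_ineq {X : Type} [Fintype X] [DecidableEq X] [Nonempty X]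
    (π : X → ℝ) (hπpos : ∀ x, 0 < π x) (hπ1 : ∑ x, π x = 1)
    (k : X → X → ℝ) (hknn : ∀ x y, 0 ≤ k x y)
    (γ : X → X → List X)
    (hγ : ∀ x y, x ≠ y → (γ x y).head? = some x ∧ (γ x y).getLast? = some y ∧
      ∀ e ∈ pathEdges (γ x y), k e.1 e.2 ≠ 0)
    (p : ℝ) (hp0 : 0 < p) (hp1 : p < 1)
    (lam mu : X → ℝ) (hlam : ∀ x, 0 < lam x) (hmu : ∀ x, 0 < mu x)
    (η : X → ℝ) (hηnn : ∀ x, 0 ≤ η x)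
    (f : X → ℝ) (hf : f ≠ 0) (hzero : (∑ x, π x * f x) = 0) :
    (∑ x, η x * |f x|) ^ (2 / p) ≤
      ((2:ℝ) ^ (2 / p - 1) *
        ((∑ x, π x * lam x ^ (p / (1 - p))) * (∑ y, η y * mu y ^ (p / (1 - p)))) ^
          ((2 - 2 * p) / p) *
        (∑ e : X × X, if Qw π k e ≠ 0 then
          (1 / Qw π k e) *
            (∑ x, ∑ y, if x ≠ y ∧ e ∈ pathEdges (γ x y) then
              π x * η y / (lam x * mu y) else 0) ^ 2
          else 0)) *
      (dirichletForm π k f f * supNorm f ^ ((2 - 2 * p) / p)) := by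
  have h1p : (0:ℝ) < 1 - p := by linarith
  set q := p / (1 - p) with hqdef
  set K := supNorm f with hKdef
  set E := dirichletForm π k f f with hEdef
  set N := ∑ x, η x * |f x| with hNdef
  set M1 := ∑ x, π x * lam x ^ q with hM1def
  set M2 := ∑ y, η y * mu y ^ q with hM2def
  set S := ∑ e : X × X, if Qw π k e ≠ 0 then
          (1 / Qw π k e) *
            (∑ x, ∑ y, if x ≠ y ∧ e ∈ pathEdges (γ x y) then
              π x * η y / (lam x * mu y) else 0) ^ 2
          else 0 with hSdef
  set W : X × X → ℝ := fun e => ∑ x, ∑ y, if x ≠ y ∧ e ∈ pathEdges (γ x y) then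
      π x * η y / (lam x * mu y) else 0 with hWdef
  set A := ∑ z : X × X, π z.1 * η z.2 / (lam z.1 * mu z.2) * |f z.2 - f z.1| with hAdef
  set B := ∑ z : X × X, π z.1 * η z.2 * (lam z.1 * mu z.2) ^ q with hBdef
  -- basic facts
  have hKle : ∀ x, |f x| ≤ K := fun x => by
    rw [hKdef, supNorm]
    exact le_ciSup (f := fun x => |f x|) (Set.Finite.bddAbove (Set.finite_range _)) x
  have hKpos : 0 < K := by
    obtain ⟨x, hx⟩ := Function.ne_iff.1 hf
    exact lt_of_lt_of_le (abs_pos.2 hx) (hKle x)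
  have h2Knn : (0:ℝ) ≤ 2 * K := by linarith
  have hNnn : 0 ≤ N := Finset.sum_nonneg fun x _ => mul_nonneg (hηnn x) (abs_nonneg _)
  have hQnn : ∀ e : X × X, 0 ≤ Qw π k e := fun e =>
    mul_nonneg (mul_nonneg (hknn _ _) (hπpos _).le) (hπpos _).le
  have hwnn : ∀ x y : X, 0 ≤ π x * η y / (lam x * mu y) := fun x y =>
    div_nonneg (mul_nonneg (hπpos x).le (hηnn y)) (mul_nonneg (hlam x).le (hmu y).le)
  have hWnn : ∀ e, 0 ≤ W e := fun e => Finset.sum_nonneg fun x _ =>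
    Finset.sum_nonneg fun y _ => by
      split_ifs
      · exact hwnn x y
      · exact le_rfl
  have hAnn : 0 ≤ A := Finset.sum_nonneg fun z _ => mul_nonneg (hwnn _ _) (abs_nonneg _)
  have hbnn : ∀ z : X × X, 0 ≤ π z.1 * η z.2 * (lam z.1 * mu z.2) ^ q := fun z =>
    mul_nonneg (mul_nonneg (hπpos _).le (hηnn _))
      (Real.rpow_nonneg (mul_nonneg (hlam _).le (hmu _).le) _)
  have hBnn : 0 ≤ B := Finset.sum_nonneg fun z _ => hbnn z
  have hSnn : 0 ≤ S := Finset.sum_nonneg fun e _ => by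
    split_ifs
    · exact mul_nonneg (one_div_nonneg.2 (hQnn e)) (sq_nonneg _)
    · exact le_rfl
  have hE2 : ∑ e : X × X, Qw π k e * (f e.2 - f e.1) ^ 2 = 2 * E := by
    have hr : (2:ℝ) * ((1 / 2) * ∑ x, ∑ y, (f x - f y) * (f x - f y) * k x y * π x * π y) =
        ∑ x, ∑ y, (f x - f y) * (f x - f y) * k x y * π x * π y := by ring
    rw [hEdef, dirichletForm, hr, Fintype.sum_prod_type]
    refine Finset.sum_congr rfl fun x _ => Finset.sum_congr rfl fun y _ => ?_
    simp only [Qw]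
    ring
  have hEnn : 0 ≤ E := by
    have h := Finset.sum_nonneg (s := Finset.univ)
      fun e : X × X => fun _ => mul_nonneg (hQnn e) (sq_nonneg (f e.2 - f e.1))
    rw [hE2] at h
    linarith
  -- Step 1 : centering
  have step1 : N ≤ ∑ x, ∑ y, π x * η y * |f y - f x| := by
    have hy : ∀ y, |f y| ≤ ∑ x, π x * |f y - f x| := by
      intro y
      have hfy : f y = ∑ x, π x * (f y - f x) := by
        have h : ∑ x, π x * (f y - f x) = (∑ x, π x) * f y - ∑ x, π x * f x := by
          rw [Finset.sum_mul, ← Finset.sum_sub_distrib]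
          exact Finset.sum_congr rfl fun x _ => by ring
        rw [h, hπ1, hzero]
        ring
      calc |f y| = |∑ x, π x * (f y - f x)| := by rw [← hfy]
        _ ≤ ∑ x, |π x * (f y - f x)| := Finset.abs_sum_le_sum_abs _ _
        _ = ∑ x, π x * |f y - f x| := Finset.sum_congr rfl fun x _ => by
            rw [abs_mul, abs_of_pos (hπpos x)]
    calc N ≤ ∑ y, η y * ∑ x, π x * |f y - f x| := by
          rw [hNdef]
          exact Finset.sum_le_sum fun y _ => mul_le_mul_of_nonneg_left (hy y) (hηnn y)
      _ = ∑ y, ∑ x, π x * η y * |f y - f x| := by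
          refine Finset.sum_congr rfl fun y _ => ?_
          rw [Finset.mul_sum]
          exact Finset.sum_congr rfl fun x _ => by ring
      _ = ∑ x, ∑ y, π x * η y * |f y - f x| := Finset.sum_comm
  -- pointwise Hoelder-type bound
  have hab : ∀ x y : X, π x * η y * |f y - f x| ≤
      (2 * K) ^ (1 - p) * ((π x * η y / (lam x * mu y) * |f y - f x|) ^ p *
        (π x * η y * (lam x * mu y) ^ q) ^ (1 - p)) := by
    intro x y
    have hdnn : (0:ℝ) ≤ |f y - f x| := abs_nonneg _
    have hrhsnn : 0 ≤ (2 * K) ^ (1 - p) * ((π x * η y / (lam x * mu y) * |f y - f x|) ^ p *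
        (π x * η y * (lam x * mu y) ^ q) ^ (1 - p)) :=
      mul_nonneg (Real.rpow_nonneg h2Knn _)
        (mul_nonneg (Real.rpow_nonneg (mul_nonneg (hwnn x y) hdnn) _)
          (Real.rpow_nonneg (hbnn (x, y)) _))
    have hd2K : |f y - f x| ≤ 2 * K := by
      have h' : |f y - f x| ≤ |f y| + |f x| := by
        simpa [sub_eq_add_neg] using abs_add_le (f y) (-(f x))
      have := hKle x
      have := hKle y
      linarith
    rcases (hηnn y).eq_or_lt.imp Eq.symm id with hη0 | hηpos
    · have hL : π x * η y * |f y - f x| = 0 := by rw [hη0]; ring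
      rw [hL]
      exact hrhsnn
    rcases hdnn.eq_or_lt.imp Eq.symm id with hd0 | hdpos
    · have hL : π x * η y * |f y - f x| = 0 := by rw [hd0]; ring
      rw [hL]
      exact hrhsnn
    · have hπη : 0 < π x * η y := mul_pos (hπpos x) hηpos
      have hlm : 0 < lam x * mu y := mul_pos (hlam x) (hmu y)
      have hq1p : q * (1 - p) = p := by
        rw [hqdef]
        field_simp
      have hexp : (π x * η y / (lam x * mu y) * |f y - f x|) ^ p *
          (π x * η y * (lam x * mu y) ^ q) ^ (1 - p) =
          π x * η y * |f y - f x| ^ p := by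
        rw [Real.mul_rpow (hwnn x y) hdnn,
            Real.div_rpow hπη.le hlm.le,
            Real.mul_rpow hπη.le (Real.rpow_nonneg hlm.le _),
            ← Real.rpow_mul hlm.le, hq1p]
        have h1 : (π x * η y) ^ p * (π x * η y) ^ (1 - p) = π x * η y := by
          have hadd : p + (1 - p) = 1 := by ring
          rw [← Real.rpow_add hπη, hadd, Real.rpow_one]
        have hlmp : (0:ℝ) < (lam x * mu y) ^ p := Real.rpow_pos_of_pos hlm p
        calc (π x * η y) ^ p / (lam x * mu y) ^ p * |f y - f x| ^ p *
              ((π x * η y) ^ (1 - p) * (lam x * mu y) ^ p)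
            = (π x * η y) ^ p * (π x * η y) ^ (1 - p) * |f y - f x| ^ p *
              ((lam x * mu y) ^ p / (lam x * mu y) ^ p) := by ring
          _ = π x * η y * |f y - f x| ^ p := by
              rw [h1, div_self hlmp.ne']
              ring
      have hsplit : π x * η y * |f y - f x| =
          π x * η y * |f y - f x| ^ p * |f y - f x| ^ (1 - p) := by
        have h : |f y - f x| ^ p * |f y - f x| ^ (1 - p) = |f y - f x| := by
          have hadd : p + (1 - p) = 1 := by ring
          rw [← Real.rpow_add hdpos, hadd, Real.rpow_one]
        conv_rhs => rw [mul_assoc, h]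
      calc π x * η y * |f y - f x|
          = π x * η y * |f y - f x| ^ p * |f y - f x| ^ (1 - p) := hsplit
        _ ≤ π x * η y * |f y - f x| ^ p * (2 * K) ^ (1 - p) := by
            apply mul_le_mul_of_nonneg_left (Real.rpow_le_rpow hdnn hd2K h1p.le)
            exact mul_nonneg hπη.le (Real.rpow_nonneg hdnn _)
        _ = (2 * K) ^ (1 - p) * ((π x * η y / (lam x * mu y) * |f y - f x|) ^ p *
            (π x * η y * (lam x * mu y) ^ q) ^ (1 - p)) := by
            rw [hexp]
            ring
  -- Step 2 : Hoelder
  have step2 : N ≤ (2 * K) ^ (1 - p) * (A ^ p * B ^ (1 - p)) := by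
    calc N ≤ ∑ x, ∑ y, π x * η y * |f y - f x| := step1
      _ ≤ ∑ x, ∑ y, (2 * K) ^ (1 - p) * ((π x * η y / (lam x * mu y) * |f y - f x|) ^ p *
            (π x * η y * (lam x * mu y) ^ q) ^ (1 - p)) :=
          Finset.sum_le_sum fun x _ => Finset.sum_le_sum fun y _ => hab x y
      _ = (2 * K) ^ (1 - p) * ∑ z : X × X,
            (π z.1 * η z.2 / (lam z.1 * mu z.2) * |f z.2 - f z.1|) ^ p *
            (π z.1 * η z.2 * (lam z.1 * mu z.2) ^ q) ^ (1 - p) := by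
          rw [Finset.mul_sum, Fintype.sum_prod_type]
      _ ≤ (2 * K) ^ (1 - p) * (A ^ p * B ^ (1 - p)) := by
          apply mul_le_mul_of_nonneg_left _ (Real.rpow_nonneg h2Knn _)
          rw [hAdef, hBdef]
          exact holder_two Finset.univ _ _
            (fun z => mul_nonneg (hwnn _ _) (abs_nonneg _))
            (fun z => hbnn z) hp0 hp1
  -- B = M1 * M2
  have stepB : B = M1 * M2 := by
    rw [hBdef, hM1def, hM2def, Finset.sum_mul_sum, Fintype.sum_prod_type]
    refine Finset.sum_congr rfl fun x _ => Finset.sum_congr rfl fun y _ => ?_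
    rw [Real.mul_rpow (hlam x).le (hmu y).le]
    ring
  -- Step A : Cauchy-Schwarz along paths
  have hpath : ∀ x y : X, x ≠ y → |f y - f x| ≤
      ∑ e ∈ (pathEdges (γ x y)).toFinset, |f e.2 - f e.1| := fun x y hxy =>
    abs_sub_le_sum_pathEdges f _ x y (hγ x y hxy).1 (hγ x y hxy).2.1
  have stepA : A ^ 2 ≤ 2 * E * S := by
    have hb1 : A ≤ ∑ x, ∑ y, ∑ e : X × X,
        (if x ≠ y ∧ e ∈ pathEdges (γ x y) then
          π x * η y / (lam x * mu y) * |f e.2 - f e.1| else 0) := by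
      rw [hAdef, Fintype.sum_prod_type]
      refine Finset.sum_le_sum fun x _ => Finset.sum_le_sum fun y _ => ?_
      by_cases hxy : x = y
      · subst hxy
        have hL : π x * η x / (lam x * mu x) * |f x - f x| = 0 := by
          rw [sub_self, abs_zero, mul_zero]
        rw [hL]
        refine Finset.sum_nonneg fun e _ => ?_
        split_ifs with h
        · exact absurd rfl h.1
        · exact le_rfl
      · have hmem : ∀ e : X × X,
            (if x ≠ y ∧ e ∈ pathEdges (γ x y) then
              π x * η y / (lam x * mu y) * |f e.2 - f e.1| else 0) =
            (if e ∈ (pathEdges (γ x y)).toFinset then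
              π x * η y / (lam x * mu y) * |f e.2 - f e.1| else 0) := fun e => by
          refine if_congr ?_ rfl rfl
          simp [hxy, List.mem_toFinset]
        calc π x * η y / (lam x * mu y) * |f y - f x|
            ≤ π x * η y / (lam x * mu y) *
              ∑ e ∈ (pathEdges (γ x y)).toFinset, |f e.2 - f e.1| :=
              mul_le_mul_of_nonneg_left (hpath x y hxy) (hwnn x y)
          _ = ∑ e ∈ (pathEdges (γ x y)).toFinset,
              π x * η y / (lam x * mu y) * |f e.2 - f e.1| := Finset.mul_sum _ _ _
          _ = ∑ e : X × X, (if e ∈ (pathEdges (γ x y)).toFinset then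
              π x * η y / (lam x * mu y) * |f e.2 - f e.1| else 0) := by
              rw [Finset.sum_ite_mem, Finset.univ_inter]
          _ = ∑ e : X × X, (if x ≠ y ∧ e ∈ pathEdges (γ x y) then
              π x * η y / (lam x * mu y) * |f e.2 - f e.1| else 0) :=
              Finset.sum_congr rfl fun e _ => (hmem e).symm
    have hswap : (∑ x, ∑ y, ∑ e : X × X,
        (if x ≠ y ∧ e ∈ pathEdges (γ x y) then
          π x * η y / (lam x * mu y) * |f e.2 - f e.1| else 0)) =
        ∑ e : X × X, W e * |f e.2 - f e.1| := by
      calc (∑ x, ∑ y, ∑ e : X × X,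
          (if x ≠ y ∧ e ∈ pathEdges (γ x y) then
            π x * η y / (lam x * mu y) * |f e.2 - f e.1| else 0)) =
          ∑ x, ∑ e : X × X, ∑ y,
          (if x ≠ y ∧ e ∈ pathEdges (γ x y) then
            π x * η y / (lam x * mu y) * |f e.2 - f e.1| else 0) :=
            Finset.sum_congr rfl fun x _ => Finset.sum_comm
        _ = ∑ e : X × X, ∑ x, ∑ y,
          (if x ≠ y ∧ e ∈ pathEdges (γ x y) then
            π x * η y / (lam x * mu y) * |f e.2 - f e.1| else 0) := Finset.sum_comm
        _ = ∑ e : X × X, W e * |f e.2 - f e.1| := by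
            refine Finset.sum_congr rfl fun e _ => ?_
            simp only [hWdef, Finset.sum_mul, ite_mul, zero_mul]
    have hW0 : ∀ e : X × X, Qw π k e = 0 → W e = 0 := by
      intro e hQ0
      have hk0 : k e.1 e.2 = 0 := by
        by_contra hk
        exact (mul_ne_zero (mul_ne_zero hk (hπpos e.1).ne') (hπpos e.2).ne') hQ0
      simp only [hWdef]
      refine Finset.sum_eq_zero fun x _ => Finset.sum_eq_zero fun y _ => ?_
      rw [if_neg]
      rintro ⟨hxy, hmem⟩
      exact (hγ x y hxy).2.2 e hmem hk0
    have hfilter : (∑ e : X × X, W e * |f e.2 - f e.1|) =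
        ∑ e ∈ Finset.univ.filter (fun e : X × X => Qw π k e ≠ 0),
          W e * |f e.2 - f e.1| := by
      symm
      apply Finset.sum_filter_of_ne
      intro e _ hne
      intro hQ0
      exact hne (by rw [hW0 e hQ0, zero_mul])
    have hCS := Finset.sum_sq_le_sum_mul_sum_of_sq_eq_mul
      (Finset.univ.filter (fun e : X × X => Qw π k e ≠ 0))
      (r := fun e => W e * |f e.2 - f e.1|)
      (f := fun e => Qw π k e * (f e.2 - f e.1) ^ 2)
      (g := fun e => (1 / Qw π k e) * (W e) ^ 2)
      (fun e _ => mul_nonneg (hQnn e) (sq_nonneg _))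
      (fun e _ => mul_nonneg (one_div_nonneg.2 (hQnn e)) (sq_nonneg _))
      (fun e he => by
        have hQne : Qw π k e ≠ 0 := by
          simpa using (Finset.mem_filter.1 he).2
        rw [mul_pow, sq_abs]
        field_simp)
    have hQsum : (∑ e ∈ Finset.univ.filter (fun e : X × X => Qw π k e ≠ 0),
        Qw π k e * (f e.2 - f e.1) ^ 2) ≤ 2 * E := by
      rw [← hE2]
      exact Finset.sum_le_sum_of_subset_of_nonneg (Finset.filter_subset _ _)
        (fun e _ _ => mul_nonneg (hQnn e) (sq_nonneg _))
    have hSsum : (∑ e ∈ Finset.univ.filter (fun e : X × X => Qw π k e ≠ 0),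
        (1 / Qw π k e) * (W e) ^ 2) = S := by
      rw [Finset.sum_filter, hSdef]
    have hTnn : 0 ≤ ∑ e ∈ Finset.univ.filter (fun e : X × X => Qw π k e ≠ 0),
        W e * |f e.2 - f e.1| :=
      Finset.sum_nonneg fun e _ => mul_nonneg (hWnn e) (abs_nonneg _)
    have hAT : A ≤ ∑ e ∈ Finset.univ.filter (fun e : X × X => Qw π k e ≠ 0),
        W e * |f e.2 - f e.1| := by
      rw [← hfilter]
      exact hb1.trans (le_of_eq hswap)
    calc A ^ 2 ≤ (∑ e ∈ Finset.univ.filter (fun e : X × X => Qw π k e ≠ 0),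
          W e * |f e.2 - f e.1|) ^ 2 := pow_le_pow_left₀ hAnn hAT 2
      _ ≤ (∑ e ∈ Finset.univ.filter (fun e : X × X => Qw π k e ≠ 0),
            Qw π k e * (f e.2 - f e.1) ^ 2) *
          (∑ e ∈ Finset.univ.filter (fun e : X × X => Qw π k e ≠ 0),
            (1 / Qw π k e) * (W e) ^ 2) := hCS
      _ = (∑ e ∈ Finset.univ.filter (fun e : X × X => Qw π k e ≠ 0),
            Qw π k e * (f e.2 - f e.1) ^ 2) * S := by rw [hSsum]
      _ ≤ 2 * E * S := mul_le_mul_of_nonneg_right hQsum hSnn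
  -- final assembly
  have e1 : (1 - p) * (2 / p) = (2 - 2 * p) / p := by
    field_simp
  have e2 : p * (2 / p) = 2 := by field_simp
  calc N ^ (2 / p)
      ≤ ((2 * K) ^ (1 - p) * (A ^ p * B ^ (1 - p))) ^ (2 / p) := by
        apply Real.rpow_le_rpow hNnn step2 (by positivity)
    _ = ((2 * K) ^ (1 - p)) ^ (2 / p) * ((A ^ p) ^ (2 / p) * ((B ^ (1 - p)) ^ (2 / p))) := by
        rw [Real.mul_rpow (Real.rpow_nonneg h2Knn _)
            (mul_nonneg (Real.rpow_nonneg hAnn _) (Real.rpow_nonneg hBnn _)),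
          Real.mul_rpow (Real.rpow_nonneg hAnn _) (Real.rpow_nonneg hBnn _)]
    _ = (2 * K) ^ ((2 - 2 * p) / p) * (A ^ 2 * B ^ ((2 - 2 * p) / p)) := by
        rw [← Real.rpow_mul h2Knn, ← Real.rpow_mul hAnn, ← Real.rpow_mul hBnn, e1, e2,
          Real.rpow_two]
    _ = 2 ^ ((2 - 2 * p) / p) * K ^ ((2 - 2 * p) / p) * A ^ 2 * B ^ ((2 - 2 * p) / p) := by
        rw [Real.mul_rpow (by norm_num) hKpos.le]
        ring
    _ ≤ 2 ^ ((2 - 2 * p) / p) * K ^ ((2 - 2 * p) / p) * (2 * E * S) * B ^ ((2 - 2 * p) / p) := by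
        apply mul_le_mul_of_nonneg_right _ (Real.rpow_nonneg hBnn _)
        apply mul_le_mul_of_nonneg_left stepA
        exact mul_nonneg (Real.rpow_nonneg (by norm_num) _) (Real.rpow_nonneg hKpos.le _)
    _ = (2 ^ (2 / p - 1) * (M1 * M2) ^ ((2 - 2 * p) / p) * S) * (E * K ^ ((2 - 2 * p) / p)) := by
        rw [← stepB,
          show (2:ℝ) / p - 1 = (2 - 2 * p) / p + 1 by field_simp; ring,
          Real.rpow_add (by norm_num : (0:ℝ) < 2), Real.rpow_one]
        ring


theorem statement4 {X : Type} [Fintype X] [DecidableEq X] [Nonempty X]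
    (π : X → ℝ) (hπpos : ∀ x, 0 < π x) (hπ1 : ∑ x, π x = 1)
    (k : X → X → ℝ) (hknn : ∀ x y, 0 ≤ k x y) (hksymm : ∀ x y, k x y = k y x)
    (hconn : (SimpleGraph.fromRel fun x y => k x y ≠ 0).Connected)
    -- a choice of a path `γ x y` from `x` to `y` for each pair of distinct points
    (γ : X → X → List X)
    (hγ : ∀ x y, x ≠ y → (γ x y).head? = some x ∧ (γ x y).getLast? = some y ∧
      ∀ e ∈ pathEdges (γ x y), k e.1 e.2 ≠ 0)
    (p : ℝ) (hp : p ∈ Set.Ioo (0 : ℝ) 1)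
    (lam mu : X → ℝ) (hlam : ∀ x, 0 < lam x) (hmu : ∀ x, 0 < mu x)
    (η : X → ℝ) (hηnn : ∀ x, 0 ≤ η x) (hη1 : ∑ x, η x = 1) :
    1 / genPoincare π k η p ≤
      (2 : ℝ) ^ (2 / p - 1) *
        ((∑ x, π x * lam x ^ (p / (1 - p))) * (∑ y, η y * mu y ^ (p / (1 - p)))) ^
          ((2 - 2 * p) / p) *
        (∑ e : X × X, if Qw π k e ≠ 0 then
          (1 / Qw π k e) *
            (∑ x, ∑ y, if x ≠ y ∧ e ∈ pathEdges (γ x y) then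
              π x * η y / (lam x * mu y) else 0) ^ 2
          else 0) := by
  obtain ⟨hp0, hp1⟩ := hp
  have key := key_ineq π hπpos hπ1 k hknn γ hγ p hp0 hp1 lam mu hlam hmu η hηnn
  set M1 := ∑ x, π x * lam x ^ (p / (1 - p)) with hM1
  set M2 := ∑ y, η y * mu y ^ (p / (1 - p)) with hM2
  set S := ∑ e : X × X, if Qw π k e ≠ 0 then
      (1 / Qw π k e) *
        (∑ x, ∑ y, if x ≠ y ∧ e ∈ pathEdges (γ x y) then
          π x * η y / (lam x * mu y) else 0) ^ 2
      else 0 with hSdef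
  set C := (2:ℝ) ^ (2 / p - 1) * (M1 * M2) ^ ((2 - 2 * p) / p) * S with hCdef
  have hQnn : ∀ e : X × X, 0 ≤ Qw π k e := fun e =>
    mul_nonneg (mul_nonneg (hknn _ _) (hπpos _).le) (hπpos _).le
  have hSnn : 0 ≤ S := Finset.sum_nonneg fun e _ => by
    split_ifs
    · exact mul_nonneg (one_div_nonneg.2 (hQnn e)) (sq_nonneg _)
    · exact le_rfl
  have hMnn : 0 ≤ M1 * M2 :=
    mul_nonneg
      (Finset.sum_nonneg fun x _ => mul_nonneg (hπpos x).le (Real.rpow_nonneg (hlam x).le _))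
      (Finset.sum_nonneg fun y _ => mul_nonneg (hηnn y) (Real.rpow_nonneg (hmu y).le _))
  have hCnn : 0 ≤ C := by
    rw [hCdef]
    exact mul_nonneg (mul_nonneg (Real.rpow_nonneg (by norm_num) _)
      (Real.rpow_nonneg hMnn _)) hSnn
  rw [genPoincare]
  set SS := { r : ℝ | ∃ f : X → ℝ, f ≠ 0 ∧ (∑ x, π x * f x) = 0 ∧ (∑ x, η x * |f x|) ≠ 0 ∧
    r = dirichletForm π k f f * supNorm f ^ ((2 - 2 * p) / p) /
      (∑ x, η x * |f x|) ^ (2 / p) } with hSS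
  have hCDpos : ∀ g : X → ℝ, g ≠ 0 → (∑ x, π x * g x) = 0 → (∑ x, η x * |g x|) ≠ 0 →
      0 < C ∧ 0 < dirichletForm π k g g * supNorm g ^ ((2 - 2 * p) / p) := by
    intro g hg h0 hηg
    have hNpos : 0 < ∑ x, η x * |g x| :=
      lt_of_le_of_ne (Finset.sum_nonneg fun x _ => mul_nonneg (hηnn x) (abs_nonneg _))
        (Ne.symm hηg)
    have hN2 : 0 < (∑ x, η x * |g x|) ^ (2 / p) := Real.rpow_pos_of_pos hNpos _
    have hkey := key g hg h0
    have hDpos : 0 < dirichletForm π k g g * supNorm g ^ ((2 - 2 * p) / p) := by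
      by_contra hle
      push_neg at hle
      have h2 : C * (dirichletForm π k g g * supNorm g ^ ((2 - 2 * p) / p)) ≤ 0 :=
        mul_nonpos_of_nonneg_of_nonpos hCnn hle
      linarith
    refine ⟨?_, hDpos⟩
    by_contra hle
    push_neg at hle
    have h2 : C * (dirichletForm π k g g * supNorm g ^ ((2 - 2 * p) / p)) ≤ 0 :=
      mul_nonpos_of_nonpos_of_nonneg hle hDpos.le
    linarith
  rcases Set.eq_empty_or_nonempty SS with he | hne
  · rw [he, Real.sInf_empty, div_zero]
    exact hCnn
  · have hCpos : 0 < C := by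
      obtain ⟨r, g, hg, h0, hηg, hr⟩ := hne
      exact (hCDpos g hg h0 hηg).1
    have lb : ∀ r ∈ SS, 1 / C ≤ r := by
      rintro r ⟨g, hg, h0, hηg, rfl⟩
      have hNpos : 0 < ∑ x, η x * |g x| :=
        lt_of_le_of_ne (Finset.sum_nonneg fun x _ => mul_nonneg (hηnn x) (abs_nonneg _))
          (Ne.symm hηg)
      have hN2 : 0 < (∑ x, η x * |g x|) ^ (2 / p) := Real.rpow_pos_of_pos hNpos _
      have hkey := key g hg h0
      have hDpos := (hCDpos g hg h0 hηg).2
      rw [div_le_div_iff₀ hCpos hN2]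
      calc 1 * (∑ x, η x * |g x|) ^ (2 / p) = (∑ x, η x * |g x|) ^ (2 / p) := one_mul _
        _ ≤ C * (dirichletForm π k g g * supNorm g ^ ((2 - 2 * p) / p)) := hkey
        _ = dirichletForm π k g g * supNorm g ^ ((2 - 2 * p) / p) * C := mul_comm _ _
    have hInf : 1 / C ≤ sInf SS := le_csInf hne lb
    have h1Cpos : 0 < 1 / C := by positivity
    calc 1 / sInf SS ≤ 1 / (1 / C) := one_div_le_one_div_of_le h1Cpos hInf
      _ = C := one_div_one_div C


end
end

section
/- For every probability measure η on 𝒳, 1/L_η(1) ≤ 2 · Σ_{e : Q(e) ≠ 0} (1/Q(e)) · ( Σ_{x,y : e ∈ γ(x,y)} π(x)η(y) )². -/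
open scoped BigOperators

noncomputable section

/-! ### Auxiliary lemmas -/

lemma pathEdges_cons₂ {X : Type} (x y : X) (t : List X) :
    pathEdges (x :: y :: t) = (x, y) :: pathEdges (y :: t) := rfl

lemma mem_pathEdges_split {X : Type} : ∀ (l : List X) (a b : X), (a, b) ∈ pathEdges l →
    ∃ s t, l = s ++ a :: b :: t
  | [], a, b, h => by simp [pathEdges] at h
  | [x], a, b, h => by simp [pathEdges] at h
  | x :: y :: t, a, b, h => by
    rw [pathEdges_cons₂] at h
    rcases List.mem_cons.1 h with h1 | h2
    · injection h1 with h1a h1b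
      subst h1a; subst h1b
      exact ⟨[], t, rfl⟩
    · obtain ⟨s, t', hst⟩ := mem_pathEdges_split (y :: t) a b h2
      exact ⟨x :: s, t', by rw [hst]; rfl⟩

lemma pathEdges_append_subset {X : Type} : ∀ (s l : List X) (e : X × X),
    e ∈ pathEdges l → e ∈ pathEdges (s ++ l)
  | [], l, e, h => h
  | x :: s, l, e, h => by
    have h' := pathEdges_append_subset s l e h
    cases hsl : s ++ l with
    | nil => rw [hsl] at h'; simp [pathEdges] at h'
    | cons c r =>
      have hx : x :: s ++ l = x :: c :: r := by rw [List.cons_append, hsl]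
      rw [hx, pathEdges_cons₂]
      rw [hsl] at h'
      exact List.mem_cons_of_mem _ h'

lemma telescope_bound {X : Type} [DecidableEq X] (f : X → ℝ) :
    ∀ (n : ℕ) (l : List X) (a b : X), l.length ≤ n → l.head? = some a →
      l.getLast? = some b →
      |f b - f a| ≤ ∑ e ∈ (pathEdges l).toFinset, |f e.2 - f e.1| := by
  intro n
  induction n with
  | zero =>
    intro l a b hlen hh _
    have : l = [] := List.length_eq_zero_iff.mp (Nat.le_zero.mp hlen)
    subst this; simp at hh
  | succ n IH =>
    intro l a b hlen hh hl
    rcases l with _ | ⟨x, l'⟩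
    · simp at hh
    rcases l' with _ | ⟨c, t⟩
    · -- l = [x]
      have hax : x = a := by simpa using hh
      have hbx : x = b := by simpa using hl
      subst hax; subst hbx
      simpa using Finset.sum_nonneg (fun e _ => abs_nonneg (f e.2 - f e.1))
    · -- l = x :: c :: t
      have hax : x = a := by simpa using hh
      subst hax
      rw [List.getLast?_cons_cons] at hl
      have hlen' : (c :: t).length ≤ n := by simpa using hlen
      by_cases hm : (x, c) ∈ pathEdges (c :: t)
      · obtain ⟨s, t', hst⟩ := mem_pathEdges_split _ _ _ hm
        have hlast2 : (x :: c :: t').getLast? = some b := by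
          rw [hst, List.getLast?_append_cons] at hl; exact hl
        have hlen2 : (x :: c :: t').length ≤ n := by
          have := congrArg List.length hst
          simp only [List.length_cons, List.length_append] at this hlen' ⊢
          omega
        have hIH := IH (x :: c :: t') x b hlen2 rfl hlast2
        refine hIH.trans (Finset.sum_le_sum_of_subset_of_nonneg ?_
          (fun e _ _ => abs_nonneg _))
        intro e he
        rw [List.mem_toFinset] at he ⊢
        rw [pathEdges_cons₂] at he ⊢
        rcases List.mem_cons.1 he with h | h
        · exact h ▸ List.mem_cons_self
        · refine List.mem_cons_of_mem _ ?_
          rw [hst]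
          refine pathEdges_append_subset s _ e ?_
          rw [pathEdges_cons₂]
          exact List.mem_cons_of_mem _ h
      · have hIH := IH (c :: t) c b hlen' rfl hl
        have hsum : ∑ e ∈ (pathEdges (x :: c :: t)).toFinset, |f e.2 - f e.1|
            = |f c - f x| + ∑ e ∈ (pathEdges (c :: t)).toFinset, |f e.2 - f e.1| := by
          rw [pathEdges_cons₂, List.toFinset_cons, Finset.sum_insert (by simpa using hm)]
        rw [hsum]
        have htri : |f b - f x| ≤ |f b - f c| + |f c - f x| := abs_sub_le (f b) (f c) (f x)
        linarith

/-- The weight of an edge for the path-counting argument. -/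
def wgt {X : Type} [Fintype X] [DecidableEq X] (π η : X → ℝ) (γ : X → X → List X)
    (e : X × X) : ℝ :=
  ∑ x, ∑ y, if x ≠ y ∧ e ∈ pathEdges (γ x y) then π x * η y else 0

lemma dirichlet_nonneg {X : Type} [Fintype X] (π : X → ℝ) (hπpos : ∀ x, 0 < π x)
    (k : X → X → ℝ) (hknn : ∀ x y, 0 ≤ k x y) (f : X → ℝ) :
    0 ≤ dirichletForm π k f f := by
  unfold dirichletForm
  refine mul_nonneg (by norm_num) (Finset.sum_nonneg fun x _ => Finset.sum_nonneg fun y _ => ?_)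
  have := mul_nonneg (mul_nonneg (mul_nonneg (mul_self_nonneg (f x - f y)) (hknn x y))
    (hπpos x).le) (hπpos y).le
  exact this

lemma key_bound {X : Type} [Fintype X] [DecidableEq X]
    (π : X → ℝ) (hπpos : ∀ x, 0 < π x) (hπ1 : ∑ x, π x = 1)
    (k : X → X → ℝ) (hknn : ∀ x y, 0 ≤ k x y)
    (γ : X → X → List X)
    (hγ : ∀ x y, x ≠ y → (γ x y).head? = some x ∧ (γ x y).getLast? = some y ∧
      ∀ e ∈ pathEdges (γ x y), k e.1 e.2 ≠ 0)
    (η : X → ℝ) (hηnn : ∀ x, 0 ≤ η x)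
    (f : X → ℝ) (hf0 : (∑ x, π x * f x) = 0) :
    (∑ x, η x * |f x|) ^ 2 ≤
      2 * dirichletForm π k f f *
        (∑ e : X × X, if Qw π k e ≠ 0 then
          (1 / Qw π k e) * (wgt π η γ e) ^ 2 else 0) := by
  classical
  set D : X × X → ℝ := fun e => |f e.2 - f e.1| with hD
  set w : X × X → ℝ := wgt π η γ with hw
  set s : Finset (X × X) := Finset.univ.filter (fun e => Qw π k e ≠ 0) with hs
  have hQnn : ∀ e : X × X, 0 ≤ Qw π k e := fun e =>
    mul_nonneg (mul_nonneg (hknn _ _) (hπpos _).le) (hπpos _).le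
  have hwnn : ∀ e, 0 ≤ w e := by
    intro e
    refine Finset.sum_nonneg fun x _ => Finset.sum_nonneg fun y _ => ?_
    split
    · exact mul_nonneg (hπpos x).le (hηnn y)
    · exact le_refl 0
  have hw0 : ∀ e, Qw π k e = 0 → w e = 0 := by
    intro e he
    refine Finset.sum_eq_zero fun x _ => Finset.sum_eq_zero fun y _ => ?_
    rw [if_neg]
    rintro ⟨hxy, hmem⟩
    have hk := (hγ x y hxy).2.2 e hmem
    exact (mul_ne_zero (mul_ne_zero hk (hπpos _).ne') (hπpos _).ne') he
  -- Step 1: η(|f|) ≤ ∑_e D e * w e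
  have h1 : ∀ y, |f y| ≤ ∑ x, π x * |f y - f x| := by
    intro y
    have hfy : ∑ x, π x * (f y - f x) = f y := by
      have : ∑ x, π x * (f y - f x) = (∑ x, π x) * f y - ∑ x, π x * f x := by
        rw [Finset.sum_mul, ← Finset.sum_sub_distrib]
        exact Finset.sum_congr rfl (fun x _ => by ring)
      rw [this, hπ1, hf0]; ring
    calc |f y| = |∑ x, π x * (f y - f x)| := by rw [hfy]
      _ ≤ ∑ x, |π x * (f y - f x)| := Finset.abs_sum_le_sum_abs _ _
      _ = ∑ x, π x * |f y - f x| :=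
          Finset.sum_congr rfl (fun x _ => by rw [abs_mul, abs_of_pos (hπpos x)])
  have h2 : (∑ x, η x * |f x|) ≤ ∑ y, ∑ x, η y * (π x * |f y - f x|) := by
    refine Finset.sum_le_sum (fun y _ => ?_)
    calc η y * |f y| ≤ η y * ∑ x, π x * |f y - f x| :=
          mul_le_mul_of_nonneg_left (h1 y) (hηnn y)
      _ = ∑ x, η y * (π x * |f y - f x|) := Finset.mul_sum _ _ _
  have h3 : ∀ y x, η y * (π x * |f y - f x|) ≤
      ∑ e : X × X, (if x ≠ y ∧ e ∈ pathEdges (γ x y) then π x * η y else 0) * D e := by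
    intro y x
    by_cases hxy : x = y
    · subst hxy
      simp
    · obtain ⟨hh, hl, _⟩ := hγ x y hxy
      have ht := telescope_bound f (γ x y).length (γ x y) x y le_rfl hh hl
      have hrew : ∀ e : X × X, (if x ≠ y ∧ e ∈ pathEdges (γ x y) then π x * η y else 0) * D e
          = if e ∈ (pathEdges (γ x y)).toFinset then π x * η y * D e else 0 := by
        intro e
        by_cases hmem : e ∈ pathEdges (γ x y) <;> simp [hmem, hxy]
      calc η y * (π x * |f y - f x|)
          ≤ η y * (π x * ∑ e ∈ (pathEdges (γ x y)).toFinset, D e) :=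
            mul_le_mul_of_nonneg_left (mul_le_mul_of_nonneg_left ht (hπpos x).le) (hηnn y)
        _ = ∑ e ∈ (pathEdges (γ x y)).toFinset, π x * η y * D e := by
            rw [Finset.mul_sum, Finset.mul_sum]
            exact Finset.sum_congr rfl (fun e _ => by ring)
        _ = ∑ e : X × X, (if x ≠ y ∧ e ∈ pathEdges (γ x y) then π x * η y else 0) * D e := by
            symm
            rw [Finset.sum_congr rfl (fun e _ => hrew e), Finset.sum_ite_mem,
              Finset.univ_inter]
  have step1 : (∑ x, η x * |f x|) ≤ ∑ e : X × X, D e * w e := by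
    refine h2.trans ?_
    have hle : ∑ y, ∑ x, η y * (π x * |f y - f x|) ≤
        ∑ y, ∑ x, ∑ e : X × X, (if x ≠ y ∧ e ∈ pathEdges (γ x y) then π x * η y else 0) * D e :=
      Finset.sum_le_sum (fun y _ => Finset.sum_le_sum (fun x _ => h3 y x))
    refine hle.trans_eq ?_
    calc ∑ y, ∑ x, ∑ e : X × X, (if x ≠ y ∧ e ∈ pathEdges (γ x y) then π x * η y else 0) * D e
        = ∑ y, ∑ e : X × X, ∑ x, (if x ≠ y ∧ e ∈ pathEdges (γ x y) then π x * η y else 0) * D e :=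
          Finset.sum_congr rfl fun y _ => Finset.sum_comm
      _ = ∑ e : X × X, ∑ y, ∑ x, (if x ≠ y ∧ e ∈ pathEdges (γ x y) then π x * η y else 0) * D e :=
          Finset.sum_comm
      _ = ∑ e : X × X, D e * w e := ?_
    refine Finset.sum_congr rfl (fun e _ => ?_)
    have : D e * w e = D e * ∑ x, ∑ y, (if x ≠ y ∧ e ∈ pathEdges (γ x y) then π x * η y else 0) := rfl
    rw [this, Finset.mul_sum, Finset.sum_comm]
    refine Finset.sum_congr rfl (fun y _ => ?_)
    rw [Finset.mul_sum]
    exact Finset.sum_congr rfl (fun x _ => by rw [mul_comm])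
  -- restrict to edges with nonzero weight
  have hsum_eq : ∑ e : X × X, D e * w e = ∑ e ∈ s, D e * w e := by
    symm
    refine Finset.sum_filter_of_ne (fun e _ hne => ?_)
    intro hQ
    exact hne (by rw [hw0 e hQ, mul_zero])
  -- Cauchy-Schwarz
  have hCS : (∑ e ∈ s, D e * w e) ^ 2 ≤
      (∑ e ∈ s, Qw π k e * D e ^ 2) * (∑ e ∈ s, w e ^ 2 / Qw π k e) := by
    have h := Finset.sum_mul_sq_le_sq_mul_sq s
      (fun e => Real.sqrt (Qw π k e) * D e) (fun e => w e / Real.sqrt (Qw π k e))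
    have e1 : ∑ e ∈ s, (Real.sqrt (Qw π k e) * D e) * (w e / Real.sqrt (Qw π k e))
        = ∑ e ∈ s, D e * w e := by
      refine Finset.sum_congr rfl (fun e he => ?_)
      have hQ : Qw π k e ≠ 0 := (Finset.mem_filter.mp he).2
      have hsq : Real.sqrt (Qw π k e) ≠ 0 :=
        Real.sqrt_ne_zero'.mpr (lt_of_le_of_ne (hQnn e) (Ne.symm hQ))
      field_simp
    have e2 : ∑ e ∈ s, (Real.sqrt (Qw π k e) * D e) ^ 2 = ∑ e ∈ s, Qw π k e * D e ^ 2 := by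
      refine Finset.sum_congr rfl (fun e _ => ?_)
      rw [mul_pow, Real.sq_sqrt (hQnn e)]
    have e3 : ∑ e ∈ s, (w e / Real.sqrt (Qw π k e)) ^ 2 = ∑ e ∈ s, w e ^ 2 / Qw π k e := by
      refine Finset.sum_congr rfl (fun e _ => ?_)
      rw [div_pow, Real.sq_sqrt (hQnn e)]
    rw [e1, e2, e3] at h
    exact h
  have hEsum : ∑ e : X × X, Qw π k e * D e ^ 2 = 2 * dirichletForm π k f f := by
    unfold dirichletForm
    rw [Fintype.sum_prod_type]
    have : ∀ x y : X, Qw π k (x, y) * D (x, y) ^ 2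
        = (f x - f y) * (f x - f y) * k x y * π x * π y := by
      intro x y
      show k x y * π x * π y * |f y - f x| ^ 2 = _
      rw [sq_abs]; ring
    rw [Finset.sum_congr rfl (fun x _ => Finset.sum_congr rfl (fun y _ => this x y))]
    ring
  have hAeq : (∑ e : X × X, if Qw π k e ≠ 0 then (1 / Qw π k e) * (wgt π η γ e) ^ 2 else 0)
      = ∑ e ∈ s, w e ^ 2 / Qw π k e := by
    rw [hs, Finset.sum_filter]
    refine Finset.sum_congr rfl (fun e _ => ?_)
    by_cases hQ : Qw π k e ≠ 0 <;> simp [hQ, hw] <;> ring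
  have hηfnn : 0 ≤ ∑ x, η x * |f x| :=
    Finset.sum_nonneg (fun x _ => mul_nonneg (hηnn x) (abs_nonneg _))
  calc (∑ x, η x * |f x|) ^ 2
      ≤ (∑ e : X × X, D e * w e) ^ 2 := pow_le_pow_left₀ hηfnn step1 2
    _ = (∑ e ∈ s, D e * w e) ^ 2 := by rw [hsum_eq]
    _ ≤ (∑ e ∈ s, Qw π k e * D e ^ 2) * (∑ e ∈ s, w e ^ 2 / Qw π k e) := hCS
    _ ≤ (∑ e : X × X, Qw π k e * D e ^ 2) * (∑ e ∈ s, w e ^ 2 / Qw π k e) := by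
        refine mul_le_mul_of_nonneg_right
          (Finset.sum_le_sum_of_subset_of_nonneg (Finset.filter_subset _ _)
            (fun e _ _ => mul_nonneg (hQnn e) (sq_nonneg _)))
          (Finset.sum_nonneg (fun e _ => div_nonneg (sq_nonneg _) (hQnn e)))
    _ = 2 * dirichletForm π k f f *
        (∑ e : X × X, if Qw π k e ≠ 0 then (1 / Qw π k e) * (wgt π η γ e) ^ 2 else 0) := by
        rw [hEsum, hAeq]

theorem statement5 {X : Type} [Fintype X] [DecidableEq X] [Nonempty X]
    (π : X → ℝ) (hπpos : ∀ x, 0 < π x) (hπ1 : ∑ x, π x = 1)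
    (k : X → X → ℝ) (hknn : ∀ x y, 0 ≤ k x y) (hksymm : ∀ x y, k x y = k y x)
    (hconn : (SimpleGraph.fromRel fun x y => k x y ≠ 0).Connected)
    -- a choice of a path `γ x y` from `x` to `y` for each pair of distinct points
    (γ : X → X → List X)
    (hγ : ∀ x y, x ≠ y → (γ x y).head? = some x ∧ (γ x y).getLast? = some y ∧
      ∀ e ∈ pathEdges (γ x y), k e.1 e.2 ≠ 0)
    (η : X → ℝ) (hηnn : ∀ x, 0 ≤ η x) (hη1 : ∑ x, η x = 1) :
    1 / genPoincare π k η 1 ≤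
      2 * (∑ e : X × X, if Qw π k e ≠ 0 then
          (1 / Qw π k e) *
            (∑ x, ∑ y, if x ≠ y ∧ e ∈ pathEdges (γ x y) then π x * η y else 0) ^ 2
          else 0) := by
  classical
  have hkey := fun (f : X → ℝ) (hf : (∑ x, π x * f x) = 0) =>
    key_bound π hπpos hπ1 k hknn γ hγ η hηnn f hf
  set A : ℝ := ∑ e : X × X, if Qw π k e ≠ 0 then
      (1 / Qw π k e) * (wgt π η γ e) ^ 2 else 0 with hA
  have hQnn : ∀ e : X × X, 0 ≤ Qw π k e := fun e =>
    mul_nonneg (mul_nonneg (hknn _ _) (hπpos _).le) (hπpos _).le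
  have hAnn : 0 ≤ A := by
    refine Finset.sum_nonneg (fun e _ => ?_)
    split
    · exact mul_nonneg (div_nonneg zero_le_one (hQnn e)) (sq_nonneg _)
    · exact le_refl 0
  show 1 / genPoincare π k η 1 ≤ 2 * A
  rw [genPoincare]
  rcases Set.eq_empty_or_nonempty { r : ℝ | ∃ f : X → ℝ, f ≠ 0 ∧ (∑ x, π x * f x) = 0 ∧
      (∑ x, η x * |f x|) ≠ 0 ∧
      r = dirichletForm π k f f * supNorm f ^ ((2 - 2 * (1:ℝ)) / 1) /
        (∑ x, η x * |f x|) ^ ((2:ℝ) / 1) } with hS | hS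
  · rw [hS, Real.sInf_empty, one_div, inv_zero]
    linarith
  · obtain ⟨r0, f0, hf0ne, hf0mean, hf0η, hr0⟩ := hS
    have hm0 : 0 < ∑ x, η x * |f0 x| :=
      lt_of_le_of_ne (Finset.sum_nonneg (fun x _ => mul_nonneg (hηnn x) (abs_nonneg _)))
        (Ne.symm hf0η)
    have hk0 := hkey f0 hf0mean
    have hE0 : 0 ≤ dirichletForm π k f0 f0 := dirichlet_nonneg π hπpos k hknn f0
    have hA0 : 0 < A := by
      by_contra h
      push_neg at h
      have h2 : 2 * dirichletForm π k f0 f0 * A ≤ 0 :=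
        mul_nonpos_of_nonneg_of_nonpos (by linarith) h
      nlinarith [pow_pos hm0 2]
    have hlb : ∀ r ∈ { r : ℝ | ∃ f : X → ℝ, f ≠ 0 ∧ (∑ x, π x * f x) = 0 ∧
        (∑ x, η x * |f x|) ≠ 0 ∧
        r = dirichletForm π k f f * supNorm f ^ ((2 - 2 * (1:ℝ)) / 1) /
          (∑ x, η x * |f x|) ^ ((2:ℝ) / 1) }, 1 / (2 * A) ≤ r := by
      rintro r ⟨f, hfne, hfm, hfη, rfl⟩
      have hm : 0 < ∑ x, η x * |f x| :=
        lt_of_le_of_ne (Finset.sum_nonneg (fun x _ => mul_nonneg (hηnn x) (abs_nonneg _)))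
          (Ne.symm hfη)
      have hk := hkey f hfm
      have hE : 0 ≤ dirichletForm π k f f := dirichlet_nonneg π hπpos k hknn f
      have hexp1 : ((2 - 2 * (1:ℝ)) / 1) = 0 := by norm_num
      have hexp2 : ((2:ℝ) / 1) = ((2:ℕ) : ℝ) := by norm_num
      rw [hexp1, Real.rpow_zero, mul_one, hexp2, Real.rpow_natCast]
      rw [div_le_div_iff₀ (by positivity) (pow_pos hm 2)]
      nlinarith [hk]
    have hs : 1 / (2 * A) ≤ sInf { r : ℝ | ∃ f : X → ℝ, f ≠ 0 ∧ (∑ x, π x * f x) = 0 ∧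
        (∑ x, η x * |f x|) ≠ 0 ∧
        r = dirichletForm π k f f * supNorm f ^ ((2 - 2 * (1:ℝ)) / 1) /
          (∑ x, η x * |f x|) ^ ((2:ℝ) / 1) } :=
      le_csInf ⟨r0, f0, hf0ne, hf0mean, hf0η, hr0⟩ hlb
    have hfin := one_div_le_one_div_of_le (by positivity) hs
    rwa [one_div_one_div] at hfin

end
end
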